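/- arXiv:1212.0048 — 5 statements merged into one kernel-verified Lean document; each statement's English description precedes it below -/
import Mathlib

section
/- For every integer U ≥ 1, W(U) = W_p(U) + [q ∣ U]·W(U/q) + Σ_{c=0}^{⌊log_p(U/(q+1))⌋} δ_{p,q}(c,U)·W(⌊U/(p^c q)⌋), where [q ∣ U]·W(U/q) means W(U/q) if q divides U and 0 otherwise, and the sum is empty when U < q+1. -/
/-- A strictly chained `(p,q)`-ary partition of `U`: a finite strictly decreasing
list of positive integers of the form `p^a * q^b`, each part divisible by the next,
summing to `U`. -/
def IsSCPartition (p q U : ℕ) (l : List ℕ) : Prop :=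
  (∀ x ∈ l, ∃ a b : ℕ, x = p ^ a * q ^ b) ∧
  List.Chain' (fun x y => y ∣ x ∧ y < x) l ∧
  l.sum = U

/-- The set of strictly chained `(p,q)`-ary partitions of `U`. -/
def Omega (p q U : ℕ) : Set (List ℕ) := {l | IsSCPartition p q U l}

/-- The subset of `Omega p q U` of partitions with no part equal to `1`. -/
def OmegaStar (p q U : ℕ) : Set (List ℕ) := {l | IsSCPartition p q U l ∧ 1 ∉ l}

/-- `W p q U` is the number of strictly chained `(p,q)`-ary partitions of `U`. -/
noncomputable def W (p q U : ℕ) : ℕ := (Omega p q U).ncard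

/-- `Wstar p q U` is the number of strictly chained `(p,q)`-ary partitions of `U`
with no part equal to `1`. -/
noncomputable def Wstar (p q U : ℕ) : ℕ := (OmegaStar p q U).ncard

/-- `Wp p n` is the number of partitions of `n` into distinct powers of `p`;
equivalently, it is `1` if every digit of `n` in base `p` is `0` or `1`, and `0`
otherwise (with `Wp p 0 = 1`). -/
def Wp (p n : ℕ) : ℕ := if ∀ d ∈ Nat.digits p n, d ≤ 1 then 1 else 0

/-- `delta p q c U` equals `1` if `⌊U/p^c⌋ ≡ 1 (mod q)` and `Wp p (U mod p^c) = 1`,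
and `0` otherwise. -/
def delta (p q c U : ℕ) : ℕ :=
  if (U / p ^ c) % q = 1 ∧ Wp p (U % p ^ c) = 1 then 1 else 0

namespace SCP

/-- Sorted-descending list of powers of `p`. -/
def PPList (p : ℕ) (l : List ℕ) : Prop :=
  l.Pairwise (· > ·) ∧ ∀ x ∈ l, ∃ a : ℕ, x = p ^ a

variable {p q : ℕ}

lemma sum_map_div_mul (d : ℕ) : ∀ (l : List ℕ), (∀ x ∈ l, d ∣ x) →
    (l.map (· / d)).sum * d = l.sum := by
  intro l
  induction l with
  | nil => simp
  | cons x r ih =>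
    intro h
    simp only [List.map_cons, List.sum_cons, add_mul]
    rw [Nat.div_mul_cancel (h x (by simp)), ih (fun y hy => h y (by simp [hy]))]

lemma sum_map_mul (d : ℕ) (l : List ℕ) : (l.map (· * d)).sum = l.sum * d := by
  induction l with
  | nil => simp
  | cons x r ih => simp [ih, add_mul]

lemma list_dvd_sum {d : ℕ} : ∀ {l : List ℕ}, (∀ x ∈ l, d ∣ x) → d ∣ l.sum := by
  intro l
  induction l with
  | nil => simp
  | cons x r ih =>
    intro h
    simpa using Nat.dvd_add (h x (by simp)) (ih (fun y hy => h y (by simp [hy])))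

lemma sum_lt (hp : 1 < p) : ∀ (l : List ℕ), l.Pairwise (· > ·) → (∀ x ∈ l, ∃ a, x = p ^ a) →
    ∀ n : ℕ, (∀ x ∈ l, x < p ^ n) → l.sum < p ^ n := by
  intro l
  induction l with
  | nil => intro _ _ n _; positivity
  | cons x r ih =>
    intro hs hpow n hlt
    obtain ⟨hx, hs'⟩ := List.pairwise_cons.mp hs
    obtain ⟨b, rfl⟩ := hpow x (List.mem_cons_self)
    have hbn : b < n := (Nat.pow_lt_pow_iff_right hp).mp (hlt _ (by simp))
    have hr : r.sum < p ^ b := ih hs' (fun y hy => hpow y (by simp [hy])) b (fun y hy => hx y hy)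
    have : p ^ b + r.sum < p ^ (b + 1) := by
      have : p ^ (b+1) = p ^ b * p := by ring
      have h2 : 2 * p ^ b ≤ p ^ b * p := by nlinarith [pow_pos (by omega : 0 < p) b]
      omega
    calc (p ^ b :: r).sum = p ^ b + r.sum := by simp
    _ < p ^ (b+1) := this
    _ ≤ p ^ n := Nat.pow_le_pow_right (by omega) (by omega)

lemma pplist_unique (hp : 1 < p) : ∀ (l₁ l₂ : List ℕ), PPList p l₁ → PPList p l₂ →
    l₁.sum = l₂.sum → l₁ = l₂ := by
  intro l₁
  induction l₁ with
  | nil =>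
    rintro (_ | ⟨y, t⟩) _ h2 hsum
    · rfl
    · exfalso
      obtain ⟨b, rfl⟩ := h2.2 y (List.mem_cons_self)
      have : 0 < p ^ b := pow_pos (by omega) b
      simp only [List.sum_nil, List.sum_cons] at hsum
      omega
  | cons x r ih =>
    rintro (_ | ⟨y, t⟩) h1 h2 hsum
    · exfalso
      obtain ⟨b, rfl⟩ := h1.2 x (List.mem_cons_self)
      have : 0 < p ^ b := pow_pos (by omega) b
      simp only [List.sum_nil, List.sum_cons] at hsum
      omega
    · obtain ⟨hx1, hs1⟩ := List.pairwise_cons.mp h1.1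
      obtain ⟨hy1, hs2⟩ := List.pairwise_cons.mp h2.1
      obtain ⟨a, hxa⟩ := h1.2 x (List.mem_cons_self)
      obtain ⟨b, hyb⟩ := h2.2 y (List.mem_cons_self)
      have hr : r.sum < x := by
        subst hxa
        exact sum_lt hp r hs1 (fun z hz => h1.2 z (by simp [hz])) a (fun z hz => hx1 z hz)
      have ht : t.sum < y := by
        subst hyb
        exact sum_lt hp t hs2 (fun z hz => h2.2 z (by simp [hz])) b (fun z hz => hy1 z hz)
      simp only [List.sum_cons] at hsum
      have hxy : x = y := by
        subst hxa hyb
        rcases lt_trichotomy a b with h | h | h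
        · exfalso
          have h1' : p ^ (a+1) ≤ p ^ b := Nat.pow_le_pow_right (by omega) (by omega)
          have h2' : p ^ a * 2 ≤ p ^ a * p := Nat.mul_le_mul_left _ (by omega)
          have h3' : p ^ (a+1) = p ^ a * p := by ring
          omega
        · rw [h]
        · exfalso
          have h1' : p ^ (b+1) ≤ p ^ a := Nat.pow_le_pow_right (by omega) (by omega)
          have h2' : p ^ b * 2 ≤ p ^ b * p := Nat.mul_le_mul_left _ (by omega)
          have h3' : p ^ (b+1) = p ^ b * p := by ring
          omega
      subst hxy
      have : r.sum = t.sum := by omega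
      rw [ih t ⟨hs1, fun z hz => h1.2 z (by simp [hz])⟩ ⟨hs2, fun z hz => h2.2 z (by simp [hz])⟩ this]

end SCP

namespace SCP2
open SCP

variable {p q : ℕ}

lemma exists_pplist (hp : 1 < p) : ∀ U : ℕ, (∀ d ∈ Nat.digits p U, d ≤ 1) →
    ∃ l : List ℕ, PPList p l ∧ l.sum = U := by
  intro U
  induction U using Nat.strong_induction_on with
  | _ U ih =>
    intro hd
    rcases Nat.eq_zero_or_pos U with rfl | hU
    · exact ⟨[], ⟨List.Pairwise.nil, by simp⟩, rfl⟩
    · rw [Nat.digits_def' hp hU] at hd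
      obtain ⟨l', hl', hsum'⟩ := ih (U / p) (Nat.div_lt_self hU (by omega))
        (fun d hdd => hd d (List.mem_cons_of_mem _ hdd))
      have hmod : U % p ≤ 1 := hd _ (List.mem_cons_self)
      refine ⟨l'.map (· * p) ++ (if U % p = 1 then [1] else []), ⟨?_, ?_⟩, ?_⟩
      · rw [List.pairwise_append]
        refine ⟨hl'.1.map _ (fun a b hab => ?_), ?_, ?_⟩
        · exact (Nat.mul_lt_mul_right (by omega : 0 < p)).mpr hab
        · split <;> simp
        · intro x hx y hy
          split at hy
          · simp only [List.mem_singleton] at hy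
            subst hy
            obtain ⟨z, hz, rfl⟩ := List.mem_map.mp hx
            obtain ⟨a, rfl⟩ := hl'.2 z hz
            have : 0 < p ^ a := pow_pos (by omega) a
            calc (1:ℕ) < p := hp
            _ ≤ p ^ a * p := Nat.le_mul_of_pos_left p this
          · simp at hy
      · intro x hx
        rcases List.mem_append.mp hx with hx | hx
        · obtain ⟨z, hz, rfl⟩ := List.mem_map.mp hx
          obtain ⟨a, rfl⟩ := hl'.2 z hz
          exact ⟨a + 1, by ring⟩
        · split at hx
          · simp only [List.mem_singleton] at hx
            exact ⟨0, by simp [hx]⟩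
          · simp at hx
      · rw [List.sum_append, sum_map_mul, hsum']
        have h2 := Nat.div_add_mod U p
        have h3 : U / p * p = p * (U / p) := Nat.mul_comm _ _
        split <;> simp <;> omega

lemma pplist_digits (hp : 1 < p) : ∀ U : ℕ, ∀ l : List ℕ, PPList p l → l.sum = U →
    ∀ d ∈ Nat.digits p U, d ≤ 1 := by
  intro U
  induction U using Nat.strong_induction_on with
  | _ U ih =>
    intro l hl hsum
    rcases Nat.eq_zero_or_pos U with rfl | hU
    · simp
    have key : ∃ l' : List ℕ, PPList p l' ∧ l'.sum * p = U - U % p ∧ U % p ≤ 1 := by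
      by_cases h1 : (1:ℕ) ∈ l
      · obtain ⟨A, B, rfl⟩ := List.append_of_mem h1
        have hB : B = [] := by
          cases B with
          | nil => rfl
          | cons y t =>
            exfalso
            have h1y : (1:ℕ) > y :=
              (List.pairwise_cons.mp (List.pairwise_append.mp hl.1).2.1).1 y (by simp)
            obtain ⟨b, rfl⟩ := hl.2 y (by simp)
            have : 0 < p ^ b := pow_pos (by omega) b
            omega
        subst hB
        have hA1 : ∀ x ∈ A, x > 1 := fun x hx =>
          (List.pairwise_append.mp hl.1).2.2 x hx 1 (by simp)
        have hAdvd : ∀ x ∈ A, p ∣ x := by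
          intro x hx
          obtain ⟨a, rfl⟩ := hl.2 x (List.mem_append_left _ hx)
          have ha : a ≠ 0 := by
            rintro rfl
            simp at hA1
            exact absurd (hA1 1 hx) (by simp)
          exact dvd_pow_self p ha
        have hpA : p ∣ A.sum := list_dvd_sum hAdvd
        have hU' : U = A.sum + 1 := by simp [← hsum]
        have hmod : U % p = 1 := by
          obtain ⟨k, hk⟩ := hpA
          rw [hU', hk, Nat.mul_add_mod]
          exact Nat.mod_eq_of_lt hp
        refine ⟨A.map (· / p), ⟨?_, ?_⟩, ?_, by omega⟩
        · rw [List.pairwise_map]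
          refine List.Pairwise.imp_of_mem (fun {a b} ha hb hab => ?_) (List.pairwise_append.mp hl.1).1
          obtain ⟨a', ha'⟩ := hAdvd a ha
          obtain ⟨b', hb'⟩ := hAdvd b hb
          subst ha' hb'
          rw [Nat.mul_div_cancel_left _ (by omega : 0 < p), Nat.mul_div_cancel_left _ (by omega : 0 < p)]
          exact lt_of_mul_lt_mul_left hab (Nat.zero_le p)
        · intro x hx
          obtain ⟨z, hz, rfl⟩ := List.mem_map.mp hx
          obtain ⟨a, rfl⟩ := hl.2 z (List.mem_append_left _ hz)
          have ha : a ≠ 0 := by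
            rintro rfl
            exact absurd (hA1 _ hz) (by simp)
          obtain ⟨a, rfl⟩ := Nat.exists_eq_succ_of_ne_zero ha
          exact ⟨a, by rw [pow_succ, Nat.mul_div_cancel _ (by omega : 0 < p)]⟩
        · rw [sum_map_div_mul p A hAdvd, hmod, hU']
          omega
      · have hdvd : ∀ x ∈ l, p ∣ x := by
          intro x hx
          obtain ⟨a, rfl⟩ := hl.2 x hx
          have ha : a ≠ 0 := by
            rintro rfl
            exact h1 (by simpa using hx)
          exact dvd_pow_self p ha
        have hmod : U % p = 0 := by
          rw [← hsum]
          exact Nat.eq_zero_of_dvd_of_lt (list_dvd_sum hdvd) |> fun _ => Nat.mod_eq_zero_of_dvd (list_dvd_sum hdvd)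
        refine ⟨l.map (· / p), ⟨?_, ?_⟩, ?_, by omega⟩
        · rw [List.pairwise_map]
          refine List.Pairwise.imp_of_mem (fun {a b} ha hb hab => ?_) hl.1
          obtain ⟨a', ha'⟩ := hdvd a ha
          obtain ⟨b', hb'⟩ := hdvd b hb
          subst ha' hb'
          rw [Nat.mul_div_cancel_left _ (by omega : 0 < p), Nat.mul_div_cancel_left _ (by omega : 0 < p)]
          exact lt_of_mul_lt_mul_left hab (Nat.zero_le p)
        · intro x hx
          obtain ⟨z, hz, rfl⟩ := List.mem_map.mp hx
          obtain ⟨a, rfl⟩ := hl.2 z hz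
          have ha : a ≠ 0 := by
            rintro rfl
            exact h1 (by simpa using hz)
          obtain ⟨a, rfl⟩ := Nat.exists_eq_succ_of_ne_zero ha
          exact ⟨a, by rw [pow_succ, Nat.mul_div_cancel _ (by omega : 0 < p)]⟩
        · rw [sum_map_div_mul p l hdvd, hsum, hmod]
          omega
    obtain ⟨l', hl', hsum', hmod'⟩ := key
    have hdivp : l'.sum = U / p := by
      have h2 := Nat.div_add_mod U p
      have h4 : l'.sum * p = p * l'.sum := Nat.mul_comm _ _
      have h3 : p * l'.sum = p * (U / p) := by omega
      exact Nat.eq_of_mul_eq_mul_left (by omega) h3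
    rw [Nat.digits_def' hp hU]
    intro d hd
    rcases List.mem_cons.mp hd with rfl | hd
    · exact hmod'
    · exact ih (U / p) (Nat.div_lt_self hU (by omega)) l' hl' hdivp d hd

end SCP2

namespace SCP3
open SCP SCP2

variable {p q : ℕ}

abbrev R : ℕ → ℕ → Prop := fun x y => y ∣ x ∧ y < x

instance R.instTrans : IsTrans ℕ (fun x y => y ∣ x ∧ y < x) :=
  ⟨fun _ _ _ hab hbc => ⟨hbc.1.trans hab.1, hbc.2.trans hab.2⟩⟩

lemma omega_pairwise {U : ℕ} {l : List ℕ} (hl : l ∈ Omega p q U) :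
    l.Pairwise R := List.isChain_iff_pairwise.mp hl.2.1

lemma omega_chain {l : List ℕ} (hl : l.Pairwise R) :
    List.Chain' (fun x y => y ∣ x ∧ y < x) l := List.isChain_iff_pairwise.mpr hl

lemma omega_sorted {U : ℕ} {l : List ℕ} (hl : l ∈ Omega p q U) :
    l.Pairwise (· > ·) := (omega_pairwise hl).imp (fun h => h.2)

lemma omega_pos (hp : 0 < p) (hq : 0 < q) {U : ℕ} {l : List ℕ} (hl : l ∈ Omega p q U)
    {x : ℕ} (hx : x ∈ l) : 0 < x := by
  obtain ⟨a, b, rfl⟩ := hl.1 x hx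
  positivity

lemma omega_le_sum {U : ℕ} {l : List ℕ} (hl : l ∈ Omega p q U) {x : ℕ} (hx : x ∈ l) :
    x ≤ U := hl.2.2 ▸ List.le_sum_of_mem hx

lemma omega_finite (hp : 1 < p) (hq : 1 < q) (U : ℕ) : (Omega p q U).Finite := by
  haveI : IsAntisymm ℕ (· > ·) := ⟨fun a b h1 h2 => by omega⟩
  have hinj : Set.InjOn List.toFinset (Omega p q U) := by
    intro l1 h1 l2 h2 heq
    have hs1 := omega_sorted h1
    have hs2 := omega_sorted h2
    exact List.Perm.eq_of_pairwise (fun a b _ _ h1 h2 => by omega) hs1 hs2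
      (List.perm_of_nodup_nodup_toFinset_eq hs1.nodup hs2.nodup heq)
  refine Set.Finite.of_finite_image (Set.Finite.subset
    ((Finset.range (U+1)).powerset.finite_toSet) ?_) hinj
  rintro s ⟨l, hl, rfl⟩
  simp only [Finset.coe_powerset, Set.mem_preimage, Set.mem_powerset_iff, Finset.coe_range]
  intro x hx
  simp only [Finset.mem_coe, List.mem_toFinset] at hx
  have := omega_le_sum hl hx
  simp only [Set.mem_Iio]
  omega

lemma split_unique {P : ℕ → Prop} (a b a' b' : List ℕ) (h : a ++ b = a' ++ b')
    (ha : ∀ x ∈ a, P x) (ha' : ∀ x ∈ a', P x)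
    (hb : ∀ h ∈ b.head?, ¬ P h) (hb' : ∀ h ∈ b'.head?, ¬ P h) : a = a' ∧ b = b' := by
  rcases List.append_eq_append_iff.mp h with ⟨c, hc1, hc2⟩ | ⟨c, hc1, hc2⟩
  · cases c with
    | nil => simp at hc1 hc2; exact ⟨hc1.symm, hc2⟩
    | cons x t =>
      exfalso
      exact hb x (by simp [hc2]) (ha' x (by simp [hc1]))
  · cases c with
    | nil => simp at hc1 hc2; exact ⟨hc1, hc2.symm⟩
    | cons x t =>
      exfalso
      exact hb' x (by simp [hc2]) (ha x (by simp [hc1]))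

end SCP3

namespace SCP4
open SCP SCP2 SCP3

variable {p q : ℕ}

lemma setA_eq (hp : 1 < p) (hq : 1 < q) (hpq : Nat.Coprime p q) (U : ℕ) :
    {l | l ∈ Omega p q U ∧ ∀ x ∈ l, ¬ q ∣ x} = {l | PPList p l ∧ l.sum = U} := by
  ext l
  simp only [Set.mem_setOf_eq]
  constructor
  · rintro ⟨hl, hnq⟩
    refine ⟨⟨omega_sorted hl, ?_⟩, hl.2.2⟩
    intro x hx
    obtain ⟨a, b, rfl⟩ := hl.1 x hx
    rcases Nat.eq_zero_or_pos b with rfl | hb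
    · exact ⟨a, by simp⟩
    · exact absurd (Dvd.dvd.mul_left (dvd_pow_self q (by omega)) _) (hnq _ hx)
  · rintro ⟨⟨hs, hpow⟩, hsum⟩
    have hnq : ∀ x ∈ l, ¬ q ∣ x := by
      intro x hx hdvd
      obtain ⟨a, rfl⟩ := hpow x hx
      have : q = 1 := Nat.Coprime.eq_one_of_dvd (hpq.symm.pow_right a) hdvd
      omega
    refine ⟨⟨?_, ?_, hsum⟩, hnq⟩
    · intro x hx
      obtain ⟨a, rfl⟩ := hpow x hx
      exact ⟨a, 0, by simp⟩
    · refine omega_chain (List.Pairwise.imp_of_mem (fun {x y} hx hy hxy => ?_) hs)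
      obtain ⟨a, rfl⟩ := hpow x hx
      obtain ⟨b, rfl⟩ := hpow y hy
      exact ⟨pow_dvd_pow p (le_of_lt ((Nat.pow_lt_pow_iff_right hp).mp hxy)), hxy⟩

lemma ncard_A (hp : 1 < p) (hq : 1 < q) (hpq : Nat.Coprime p q) (U : ℕ) :
    {l | l ∈ Omega p q U ∧ ∀ x ∈ l, ¬ q ∣ x}.ncard = Wp p U := by
  rw [setA_eq hp hq hpq, Wp]
  split
  · rename_i h
    obtain ⟨L, hL, hLs⟩ := exists_pplist hp U h
    have heq : {l : List ℕ | PPList p l ∧ l.sum = U} = {L} := by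
      ext l
      simp only [Set.mem_setOf_eq, Set.mem_singleton_iff]
      constructor
      · rintro ⟨h1, h2⟩
        exact pplist_unique hp l L h1 hL (by rw [h2, hLs])
      · rintro rfl
        exact ⟨hL, hLs⟩
    rw [heq, Set.ncard_singleton]
  · rename_i h
    have heq : {l : List ℕ | PPList p l ∧ l.sum = U} = ∅ := by
      ext l
      simp only [Set.mem_setOf_eq, Set.mem_empty_iff_false, iff_false]
      rintro ⟨h1, h2⟩
      exact h (pplist_digits hp U l h1 h2)
    rw [heq, Set.ncard_empty]

lemma ncard_B (hp : 1 < p) (hq : 1 < q) (hpq : Nat.Coprime p q) (U : ℕ) :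
    {l | l ∈ Omega p q U ∧ ∀ x ∈ l, q ∣ x}.ncard = if q ∣ U then W p q (U / q) else 0 := by
  split
  · rename_i hdU
    have himg : {l | l ∈ Omega p q U ∧ ∀ x ∈ l, q ∣ x}
        = (fun m : List ℕ => m.map (· * q)) '' Omega p q (U / q) := by
      ext l
      simp only [Set.mem_setOf_eq, Set.mem_image]
      constructor
      · rintro ⟨hl, hdvd⟩
        refine ⟨l.map (· / q), ⟨?_, ?_, ?_⟩, ?_⟩
        · intro x hx
          obtain ⟨z, hz, rfl⟩ := List.mem_map.mp hx
          obtain ⟨a, b, rfl⟩ := hl.1 z hz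
          have hb : b ≠ 0 := by
            rintro rfl
            have : q = 1 := Nat.Coprime.eq_one_of_dvd (hpq.symm.pow_right a)
              (by simpa using hdvd _ hz)
            omega
          obtain ⟨b, rfl⟩ := Nat.exists_eq_succ_of_ne_zero hb
          exact ⟨a, b, by rw [pow_succ, ← mul_assoc, Nat.mul_div_cancel _ (by omega)]⟩
        · refine omega_chain ?_
          rw [List.pairwise_map]
          refine List.Pairwise.imp_of_mem (fun {x y} hx hy hxy => ?_) (omega_pairwise hl)
          obtain ⟨x', rfl⟩ := hdvd x hx
          obtain ⟨y', rfl⟩ := hdvd y hy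
          rw [Nat.mul_div_cancel_left _ (by omega : 0 < q),
            Nat.mul_div_cancel_left _ (by omega : 0 < q)]
          exact ⟨(mul_dvd_mul_iff_left (by omega : q ≠ 0)).mp hxy.1,
            lt_of_mul_lt_mul_left hxy.2 (Nat.zero_le q)⟩
        · have h1 := sum_map_div_mul q l hdvd
          rw [hl.2.2] at h1
          exact (Nat.div_eq_of_eq_mul_left (by omega) h1.symm).symm
        · rw [List.map_map]
          have hcongr : ∀ x ∈ l, ((· * q) ∘ (· / q)) x = id x := fun x hx => by
            simp [Function.comp, Nat.div_mul_cancel (hdvd x hx)]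
          rw [List.map_congr_left hcongr, List.map_id]
      · rintro ⟨m, hm, rfl⟩
        refine ⟨⟨?_, ?_, ?_⟩, ?_⟩
        · intro x hx
          obtain ⟨z, hz, rfl⟩ := List.mem_map.mp hx
          obtain ⟨a, b, rfl⟩ := hm.1 z hz
          exact ⟨a, b+1, by ring⟩
        · refine omega_chain ?_
          rw [List.pairwise_map]
          exact (omega_pairwise hm).imp (fun {x y} hxy =>
            ⟨mul_dvd_mul_right hxy.1 q, (Nat.mul_lt_mul_right (by omega : 0 < q)).mpr hxy.2⟩)
        · rw [sum_map_mul, hm.2.2, Nat.div_mul_cancel hdU]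
        · intro x hx
          obtain ⟨z, hz, rfl⟩ := List.mem_map.mp hx
          exact Dvd.intro_left z rfl
      
    rw [himg, Set.ncard_image_of_injOn (fun l1 _ l2 _ h =>
      List.map_injective_iff.mpr (fun a b hab => Nat.eq_of_mul_eq_mul_right (by omega) hab) h)]
    rfl
  · rename_i hdU
    have heq : {l | l ∈ Omega p q U ∧ ∀ x ∈ l, q ∣ x} = ∅ := by
      ext l
      simp only [Set.mem_setOf_eq, Set.mem_empty_iff_false, iff_false]
      rintro ⟨hl, hdvd⟩
      exact hdU (hl.2.2 ▸ list_dvd_sum hdvd)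
    rw [heq, Set.ncard_empty]

end SCP4

namespace SCP5
open SCP SCP2 SCP3 SCP4

variable {p q : ℕ}

/-- The mixed class with top pure-`p` part `p ^ c`. -/
def PC (p q c : ℕ) (l : List ℕ) : Prop :=
  ∃ a b : List ℕ, l = a ++ b ∧ a ≠ [] ∧ (∀ x ∈ a, q ∣ x) ∧
    b.head? = some (p ^ c) ∧ (∀ x ∈ b, ¬ q ∣ x)

lemma not_q_dvd_pow (hq : 1 < q) (hpq : Nat.Coprime p q) (i : ℕ) : ¬ q ∣ p ^ i :=
  fun h => absurd ((hpq.symm.pow_right i).eq_one_of_dvd h) (by omega)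

lemma pplist_pairwiseR (hp : 1 < p) {l : List ℕ} (h : PPList p l) : l.Pairwise R := by
  refine List.Pairwise.imp_of_mem (fun {x y} hx hy hxy => ?_) h.1
  obtain ⟨a, rfl⟩ := h.2 x hx
  obtain ⟨b, rfl⟩ := h.2 y hy
  exact ⟨pow_dvd_pow p (le_of_lt ((Nat.pow_lt_pow_iff_right hp).mp hxy)), hxy⟩

lemma C_facts (hp : 1 < p) (hq : 1 < q) (hpq : Nat.Coprime p q) {U c : ℕ} {l : List ℕ}
    (hl : l ∈ Omega p q U) (hpc : PC p q c l) :
    (U / p ^ c) % q = 1 ∧ Wp p (U % p ^ c) = 1 ∧ p ^ c * (q + 1) ≤ U := by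
  obtain ⟨a, b, rfl, hane, haq, hbh, hbq⟩ := hpc
  have hpw := omega_pairwise hl
  rw [List.pairwise_append] at hpw
  obtain ⟨hA, hB, hcross⟩ := hpw
  -- b = p ^ c :: t
  obtain ⟨h, t, rfl⟩ : ∃ h t, b = h :: t := by
    cases b with
    | nil => simp at hbh
    | cons h t => exact ⟨h, t, rfl⟩
  have hhead : h = p ^ c := by simpa using hbh
  subst hhead
  -- b is a PPList
  have hbpow : ∀ x ∈ (p ^ c :: t), ∃ i, x = p ^ i := by
    intro x hx
    obtain ⟨α, β, rfl⟩ := hl.1 x (List.mem_append_right _ hx)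
    rcases Nat.eq_zero_or_pos β with rfl | hβ
    · exact ⟨α, by simp⟩
    · exact absurd (Dvd.dvd.mul_left (dvd_pow_self q (by omega)) _) (hbq _ hx)
  have hbsorted : (p ^ c :: t).Pairwise (· > ·) := hB.imp (fun h => h.2)
  have htlt : ∀ x ∈ t, x < p ^ c := fun x hx => (List.pairwise_cons.mp hbsorted).1 x hx
  have htsum : t.sum < p ^ c :=
    sum_lt hp t (List.pairwise_cons.mp hbsorted).2
      (fun x hx => hbpow x (List.mem_cons_of_mem _ hx)) c htlt
  -- each element of a is divisible by p ^ c * q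
  have had : ∀ x ∈ a, p ^ c * q ∣ x := by
    intro x hx
    have h1 : p ^ c ∣ x := (hcross x hx _ (List.mem_cons_self)).1
    exact Nat.Coprime.mul_dvd_of_dvd_of_dvd (hpq.pow_left c) h1 (haq x hx)
  have hda : p ^ c * q ∣ a.sum := list_dvd_sum had
  obtain ⟨k, hk⟩ := hda
  have hasum_pos : 0 < a.sum := by
    cases a with
    | nil => simp at hane
    | cons w a' =>
      have hwpos : 0 < w := omega_pos (by omega) (by omega) hl (by simp)
      simp only [List.sum_cons]
      omega
  have hk1 : 1 ≤ k := by
    rcases Nat.eq_zero_or_pos k with rfl | h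
    · rw [hk] at hasum_pos; simp at hasum_pos
    · exact h
  have hsum : U = p ^ c * q * k + (p ^ c + t.sum) := by
    have h2 := hl.2.2
    simp only [List.sum_append, List.sum_cons] at h2
    omega
  have hrw : U = p ^ c * (q * k + 1) + t.sum := by rw [hsum]; ring
  have hUdiv : U / p ^ c = q * k + 1 := by
    rw [hrw, Nat.mul_add_div (pow_pos (by omega : 0 < p) c), Nat.div_eq_of_lt htsum]
  have hUmod : U % p ^ c = t.sum := by
    rw [hrw, Nat.mul_add_mod, Nat.mod_eq_of_lt htsum]
  refine ⟨?_, ?_, ?_⟩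
  · rw [hUdiv, Nat.mul_add_mod, Nat.mod_eq_of_lt hq]
  · rw [hUmod, Wp, if_pos]
    exact pplist_digits hp t.sum t ⟨(List.pairwise_cons.mp hbsorted).2,
      fun x hx => hbpow x (List.mem_cons_of_mem _ hx)⟩ rfl
  · have h3 : p ^ c * q * 1 ≤ p ^ c * q * k := Nat.mul_le_mul_left _ hk1
    have h4 : p ^ c * (q+1) = p ^ c * q * 1 + p ^ c := by ring
    omega

end SCP5

namespace SCP6
open SCP SCP2 SCP3 SCP4 SCP5

variable {p q : ℕ}

lemma C_struct (hp : 1 < p) (hq : 1 < q) (hpq : Nat.Coprime p q) {U c : ℕ} {l : List ℕ}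
    (hl : l ∈ Omega p q U) (hpc : PC p q c l) :
    ∃ a t k, l = a ++ (p ^ c :: t) ∧ PPList p (p ^ c :: t) ∧ t.sum < p ^ c ∧
      (∀ x ∈ a, p ^ c * q ∣ x) ∧ a ≠ [] ∧ a.sum = p ^ c * q * k ∧ 1 ≤ k ∧
      U = p ^ c * q * k + (p ^ c + t.sum) := by
  obtain ⟨a, b, rfl, hane, haq, hbh, hbq⟩ := hpc
  have hpw := omega_pairwise hl
  rw [List.pairwise_append] at hpw
  obtain ⟨hA, hB, hcross⟩ := hpw
  obtain ⟨h, t, rfl⟩ : ∃ h t, b = h :: t := by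
    cases b with
    | nil => simp at hbh
    | cons h t => exact ⟨h, t, rfl⟩
  have hhead : h = p ^ c := by simpa using hbh
  subst hhead
  have hbpow : ∀ x ∈ (p ^ c :: t), ∃ i, x = p ^ i := by
    intro x hx
    obtain ⟨α, β, rfl⟩ := hl.1 x (List.mem_append_right _ hx)
    rcases Nat.eq_zero_or_pos β with rfl | hβ
    · exact ⟨α, by simp⟩
    · exact absurd (Dvd.dvd.mul_left (dvd_pow_self q (by omega)) _) (hbq _ hx)
  have hbsorted : (p ^ c :: t).Pairwise (· > ·) := hB.imp (fun h => h.2)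
  have htlt : ∀ x ∈ t, x < p ^ c := fun x hx => (List.pairwise_cons.mp hbsorted).1 x hx
  have htsum : t.sum < p ^ c :=
    sum_lt hp t (List.pairwise_cons.mp hbsorted).2
      (fun x hx => hbpow x (List.mem_cons_of_mem _ hx)) c htlt
  have had : ∀ x ∈ a, p ^ c * q ∣ x := by
    intro x hx
    have h1 : p ^ c ∣ x := (hcross x hx _ (List.mem_cons_self)).1
    exact Nat.Coprime.mul_dvd_of_dvd_of_dvd (hpq.pow_left c) h1 (haq x hx)
  obtain ⟨k, hk⟩ := list_dvd_sum had
  have hasum_pos : 0 < a.sum := by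
    cases a with
    | nil => simp at hane
    | cons w a' =>
      have hwpos : 0 < w := omega_pos (by omega) (by omega) hl (by simp)
      simp only [List.sum_cons]
      omega
  have hk1 : 1 ≤ k := by
    rcases Nat.eq_zero_or_pos k with rfl | h
    · rw [hk] at hasum_pos; simp at hasum_pos
    · exact h
  have hsum : U = p ^ c * q * k + (p ^ c + t.sum) := by
    have h2 := hl.2.2
    simp only [List.sum_append, List.sum_cons] at h2
    omega
  exact ⟨a, t, k, rfl, ⟨hbsorted, hbpow⟩, htsum, had, hane, hk, hk1, hsum⟩

lemma C_card (hp : 1 < p) (hq : 1 < q) (hpq : Nat.Coprime p q) {U c : ℕ}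
    (hc1 : (U / p ^ c) % q = 1) (hc2 : Wp p (U % p ^ c) = 1) (hU3 : p ^ c * (q + 1) ≤ U) :
    {l | l ∈ Omega p q U ∧ PC p q c l}.ncard = W p q (U / (p ^ c * q)) := by
  set d := p ^ c * q with hd
  set V := U / (p ^ c * q) with hV
  have hppos : 0 < p ^ c := pow_pos (by omega) c
  have hdpos : 0 < d := Nat.mul_pos hppos (by omega)
  have hVq : U / p ^ c = q * V + 1 := by
    have h1 : U / (p ^ c * q) = U / p ^ c / q := (Nat.div_div_eq_div_mul U _ q).symm
    have h2 := Nat.div_add_mod (U / p ^ c) q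
    rw [hc1] at h2
    rw [hV, h1]
    omega
  have hV1 : 1 ≤ V := by
    have h5 : q + 1 ≤ U / p ^ c := by
      rw [Nat.le_div_iff_mul_le hppos]
      calc (q + 1) * p ^ c = p ^ c * (q + 1) := by ring
      _ ≤ U := hU3
    rcases Nat.eq_zero_or_pos V with h | h
    · rw [h] at hVq; omega
    · exact h
  set r := U % p ^ c with hr
  have hrlt : r < p ^ c := Nat.mod_lt _ hppos
  have hrdig : ∀ x ∈ Nat.digits p r, x ≤ 1 := by
    rw [Wp] at hc2
    split at hc2
    · assumption
    · omega
  obtain ⟨tl, htl, htlsum⟩ := exists_pplist hp r hrdig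
  have htl_lt : ∀ x ∈ tl, x < p ^ c := fun x hx =>
    lt_of_le_of_lt (htlsum ▸ List.le_sum_of_mem hx) hrlt
  set TL := p ^ c :: tl with hTL
  have hTLpp : PPList p TL := by
    constructor
    · rw [hTL, List.pairwise_cons]
      exact ⟨htl_lt, htl.1⟩
    · rintro x hx
      rcases List.mem_cons.mp hx with rfl | hx
      · exact ⟨c, rfl⟩
      · exact htl.2 x hx
  have hTLsum : TL.sum = p ^ c + r := by simp [hTL, htlsum]
  have hU : U = d * V + (p ^ c + r) := by
    have h6 := Nat.div_add_mod U (p ^ c)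
    rw [hVq] at h6
    have h7 : p ^ c * (q * V + 1) = p ^ c * q * V + p ^ c := by ring
    rw [hd]
    omega
  have himg : {l | l ∈ Omega p q U ∧ PC p q c l}
      = (fun m : List ℕ => m.map (· * d) ++ TL) '' Omega p q V := by
    ext l
    simp only [Set.mem_setOf_eq, Set.mem_image]
    constructor
    · rintro ⟨hl, hpc⟩
      obtain ⟨a, t, k, rfl, hbpp, htsum, had, hane, hk, hk1, hsum⟩ :=
        C_struct hp hq hpq hl hpc
      have htr : t.sum = r := by
        have hrw : U = p ^ c * (q * k + 1) + t.sum := by rw [hsum]; ring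
        rw [hr, hrw, Nat.mul_add_mod, Nat.mod_eq_of_lt htsum]
      have hbeq : (p ^ c :: t) = TL := by
        refine pplist_unique hp _ _ hbpp hTLpp ?_
        rw [hTLsum]
        simp [htr]
      have hkV : k = V := by
        have hU2 : U = p ^ c * q * V + (p ^ c + r) := hU
        have h8 : p ^ c * q * k = p ^ c * q * V := by omega
        exact Nat.eq_of_mul_eq_mul_left (by positivity) h8
      subst hkV
      refine ⟨a.map (· / d), ⟨?_, ?_, ?_⟩, ?_⟩
      · intro x hx
        obtain ⟨z, hz, rfl⟩ := List.mem_map.mp hx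
        obtain ⟨α, β, rfl⟩ := hl.1 z (List.mem_append_left _ hz)
        have hdz := had _ hz
        have hβ : 1 ≤ β := by
          by_contra hcon
          push_neg at hcon
          interval_cases β
          have hqd : q ∣ p ^ α := by
            have : q ∣ p ^ c * q := Dvd.intro_left _ rfl
            simpa using this.trans hdz
          exact not_q_dvd_pow hq hpq α hqd
        have hα : c ≤ α := by
          have h9 : p ^ c ∣ p ^ α * q ^ β := by
            have : p ^ c ∣ p ^ c * q := Dvd.intro _ rfl
            exact this.trans hdz
          have h10 : p ^ c ∣ p ^ α :=
            (Nat.Coprime.dvd_of_dvd_mul_right (Nat.Coprime.pow c β hpq) h9)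
          exact (Nat.pow_dvd_pow_iff_le_right hp).mp h10
        obtain ⟨α', rfl⟩ := Nat.exists_eq_add_of_le hα
        obtain ⟨β', rfl⟩ := Nat.exists_eq_add_of_le hβ
        refine ⟨α', β', ?_⟩
        have h11 : p ^ (c + α') * q ^ (1 + β') = p ^ α' * q ^ β' * d := by rw [hd]; ring
        rw [h11, Nat.mul_div_cancel _ hdpos]
      · refine omega_chain ?_
        rw [List.pairwise_map]
        have hApw : a.Pairwise R := ((List.pairwise_append.mp (omega_pairwise hl)).1)
        refine List.Pairwise.imp_of_mem (fun {x y} hx hy hxy => ?_) hApw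
        obtain ⟨x', rfl⟩ := had x hx
        obtain ⟨y', rfl⟩ := had y hy
        rw [hd] at *
        rw [Nat.mul_div_cancel_left _ hdpos, Nat.mul_div_cancel_left _ hdpos]
        exact ⟨(mul_dvd_mul_iff_left (by omega : p ^ c * q ≠ 0)).mp hxy.1,
          lt_of_mul_lt_mul_left hxy.2 (Nat.zero_le _)⟩
      · have h12 := sum_map_div_mul d a had
        have h13 : a.sum = d * V := by rw [hd]; omega
        rw [h13] at h12
        have h14 : (a.map (· / d)).sum * d = V * d := by rw [h12]; ring
        exact Nat.eq_of_mul_eq_mul_right hdpos h14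
      · rw [hbeq, List.map_map]
        congr 1
        have hcongr : ∀ x ∈ a, ((· * d) ∘ (· / d)) x = id x := fun x hx => by
          simp [Function.comp, Nat.div_mul_cancel (show d ∣ x from had x hx)]
        rw [List.map_congr_left hcongr, List.map_id]
    · rintro ⟨m, hm, rfl⟩
      have hm0 : m ≠ [] := by
        rintro rfl
        have h15 := hm.2.2
        simp at h15
        omega
      refine ⟨⟨?_, ?_, ?_⟩, ?_⟩
      · intro x hx
        rcases List.mem_append.mp hx with hx | hx
        · obtain ⟨z, hz, rfl⟩ := List.mem_map.mp hx
          obtain ⟨α, β, rfl⟩ := hm.1 z hz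
          exact ⟨α + c, β + 1, by rw [hd]; ring⟩
        · obtain ⟨i, rfl⟩ := hTLpp.2 x hx
          exact ⟨i, 0, by simp⟩
      · refine omega_chain ?_
        rw [List.pairwise_append]
        refine ⟨?_, pplist_pairwiseR hp hTLpp, ?_⟩
        · rw [List.pairwise_map]
          exact (omega_pairwise hm).imp (fun {x y} hxy =>
            ⟨mul_dvd_mul_right hxy.1 d, (Nat.mul_lt_mul_right hdpos).mpr hxy.2⟩)
        · intro x hx y hy
          obtain ⟨z, hz, rfl⟩ := List.mem_map.mp hx
          obtain ⟨i, rfl⟩ := hTLpp.2 y hy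
          have hylec : p ^ i ≤ p ^ c := by
            rcases List.mem_cons.mp hy with heq | hmem
            · exact le_of_eq heq
            · exact le_of_lt (htl_lt _ hmem)
          have hidvd : p ^ i ∣ p ^ c :=
            (Nat.pow_dvd_pow_iff_le_right hp).mpr ((Nat.pow_le_pow_iff_right hp).mp hylec)
          have hzpos : 0 < z := omega_pos (by omega) (by omega) hm hz
          constructor
          · exact hidvd.trans ((Dvd.intro _ rfl : (p^c : ℕ) ∣ p ^ c * q).trans
              (Dvd.intro_left z (by rw [hd])))
          · have h16 : p ^ c < d := by
              rw [hd]
              calc p ^ c = p ^ c * 1 := by ring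
              _ < p ^ c * q := by
                exact (Nat.mul_lt_mul_left hppos).mpr hq
            have h17 : d ≤ z * d := Nat.le_mul_of_pos_left d hzpos
            omega
      · rw [List.sum_append, sum_map_mul, hm.2.2, hTLsum]
        have hU2 : U = p ^ c * q * V + (p ^ c + r) := hU
        have h19 : V * d = p ^ c * q * V := by rw [hd]; ring
        omega
      · refine ⟨m.map (· * d), TL, rfl, ?_, ?_, by simp [hTL], ?_⟩
        · rcases m with _ | ⟨w, m'⟩
          · exact absurd rfl hm0
          · simp
        · intro x hx
          obtain ⟨z, hz, rfl⟩ := List.mem_map.mp hx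
          exact ⟨z * p ^ c, by rw [hd]; ring⟩
        · intro x hx
          obtain ⟨i, rfl⟩ := hTLpp.2 x hx
          exact not_q_dvd_pow hq hpq i
  rw [himg, Set.ncard_image_of_injOn (fun l1 _ l2 _ h => ?_)]
  · rfl
  · have h18 := List.append_cancel_right h
    exact List.map_injective_iff.mpr
      (fun a b hab => Nat.eq_of_mul_eq_mul_right hdpos hab) h18

end SCP6

namespace SCP7
open SCP SCP2 SCP3 SCP4 SCP5 SCP6

variable {p q : ℕ}

def Pb (q : ℕ) : ℕ → Bool := fun x => x % q == 0

lemma Pb_iff (hq : 0 < q) (x : ℕ) : Pb q x = true ↔ q ∣ x := by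
  simp [Pb]
  exact ⟨fun h => Nat.dvd_of_mod_eq_zero h, fun h => Nat.eq_zero_of_dvd_of_lt h |> fun _ => Nat.mod_eq_zero_of_dvd h⟩

lemma head_dropWhile_false (P : ℕ → Bool) :
    ∀ (l : List ℕ) (h : ℕ) (t : List ℕ), l.dropWhile P = h :: t → P h = false := by
  intro l
  induction l with
  | nil => intro h t hht; simp [List.dropWhile] at hht
  | cons x xs ih =>
    intro h t hht
    by_cases hx : P x = true
    · rw [List.dropWhile_cons_of_pos hx] at hht
      exact ih h t hht
    · rw [List.dropWhile_cons_of_neg hx] at hht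
      injection hht with h1 h2
      subst h1
      simpa using hx

theorem main (hp : 1 < p) (hq : 1 < q) (hpq : Nat.Coprime p q)
    (U : ℕ) (hU : 1 ≤ U) :
    W p q U = Wp p U + (if q ∣ U then W p q (U / q) else 0) +
      ∑ c ∈ Finset.range (if U < q + 1 then 0 else Nat.log p (U / (q + 1)) + 1),
        delta p q c U * W p q (U / (p ^ c * q)) := by
  classical
  have hfin := omega_finite hp hq U
  set N := if U < q + 1 then 0 else Nat.log p (U / (q + 1)) + 1 with hN
  set F := hfin.toFinset with hF
  set FA := F.filter (fun l => ∀ x ∈ l, ¬ q ∣ x) with hFA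
  set FB := F.filter (fun l => ∀ x ∈ l, q ∣ x) with hFB
  set FC : ℕ → Finset (List ℕ) := fun c => F.filter (fun l => PC p q c l) with hFC
  have hmemF : ∀ l : List ℕ, l ∈ F ↔ l ∈ Omega p q U := fun l => hfin.mem_toFinset
  have hfacts : ∀ (c : ℕ) (l : List ℕ), l ∈ Omega p q U → PC p q c l →
      (U / p ^ c) % q = 1 ∧ Wp p (U % p ^ c) = 1 ∧ c < N := by
    intro c l hl hpc
    obtain ⟨h1, h2, h3⟩ := C_facts hp hq hpq hl hpc
    refine ⟨h1, h2, ?_⟩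
    have hpc1 : 1 ≤ p ^ c := Nat.one_le_pow _ _ (by omega)
    have h4 : q + 1 ≤ U := le_trans (Nat.le_mul_of_pos_left (q + 1) (by omega)) h3
    have h5 : p ^ c ≤ U / (q + 1) := (Nat.le_div_iff_mul_le (by omega)).mpr h3
    have h6 : U / (q + 1) ≠ 0 := by omega
    have h7 : c ≤ Nat.log p (U / (q + 1)) := (Nat.le_log_iff_pow_le hp h6).mpr h5
    rw [hN, if_neg (by omega)]
    omega
  have hcov : ∀ l ∈ F, l ∈ FA ∨ l ∈ FB ∨ ∃ c ∈ Finset.range N, l ∈ FC c := by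
    intro l hlF
    have hl : l ∈ Omega p q U := (hmemF l).mp hlF
    by_cases hA : ∀ x ∈ l, ¬ q ∣ x
    · exact Or.inl (Finset.mem_filter.mpr ⟨hlF, hA⟩)
    by_cases hB : ∀ x ∈ l, q ∣ x
    · exact Or.inr (Or.inl (Finset.mem_filter.mpr ⟨hlF, hB⟩))
    push_neg at hA hB
    obtain ⟨x0, hx0, hqx0⟩ := hA
    obtain ⟨x1, hx1, hqx1⟩ := hB
    have hab : l.takeWhile (Pb q) ++ l.dropWhile (Pb q) = l := List.takeWhile_append_dropWhile
    have haq : ∀ x ∈ l.takeWhile (Pb q), q ∣ x := fun x hx =>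
      (Pb_iff (by omega) x).mp (List.mem_takeWhile_imp hx)
    have hbne : l.dropWhile (Pb q) ≠ [] := by
      intro hbnil
      exact hqx1 ((Pb_iff (by omega) x1).mp (List.dropWhile_eq_nil_iff.mp hbnil x1 hx1))
    obtain ⟨h0, t0, hbcons⟩ : ∃ h0 t0, l.dropWhile (Pb q) = h0 :: t0 := by
      cases hdrop : l.dropWhile (Pb q) with
      | nil => exact absurd hdrop hbne
      | cons h0 t0 => exact ⟨h0, t0, rfl⟩
    have hh0 : ¬ q ∣ h0 := by
      have hfalse := head_dropWhile_false (Pb q) l h0 t0 hbcons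
      intro hcon
      rw [← Pb_iff (by omega : 0 < q) h0] at hcon
      rw [hfalse] at hcon
      exact Bool.false_ne_true hcon
    have hh0mem : h0 ∈ l := by
      rw [← hab, hbcons]
      exact List.mem_append_right _ (List.mem_cons_self)
    have hane : l.takeWhile (Pb q) ≠ [] := by
      intro hanil
      rw [hanil, List.nil_append] at hab
      have hx0' : x0 ∈ h0 :: t0 := by rw [← hbcons, hab]; exact hx0
      rcases List.mem_cons.mp hx0' with rfl | hxt
      · exact hh0 hqx0
      · have hpwb : (h0 :: t0).Pairwise R := by
          rw [← hbcons, hab]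
          exact omega_pairwise hl
        have hr : R h0 x0 := (List.pairwise_cons.mp hpwb).1 x0 hxt
        exact hh0 (hqx0.trans hr.1)
    have hbq : ∀ x ∈ l.dropWhile (Pb q), ¬ q ∣ x := by
      intro x hx hcon
      rcases List.mem_cons.mp (by rw [← hbcons]; exact hx) with rfl | hxt
      · exact hh0 hcon
      · have hbsub : (l.dropWhile (Pb q)).Sublist l := (List.dropWhile_suffix (Pb q)).sublist
        have hpwb : (h0 :: t0).Pairwise R := by
          rw [← hbcons]
          exact List.Pairwise.sublist hbsub (omega_pairwise hl)
        have hr : R h0 x := (List.pairwise_cons.mp hpwb).1 x hxt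
        exact hh0 (hcon.trans hr.1)
    obtain ⟨γ, hγ⟩ : ∃ γ, h0 = p ^ γ := by
      obtain ⟨α, β, hx⟩ := hl.1 h0 hh0mem
      rcases Nat.eq_zero_or_pos β with hβ | hβ
      · exact ⟨α, by simp [hx, hβ]⟩
      · exact absurd (hx ▸ Dvd.dvd.mul_left (dvd_pow_self q (by omega)) _) hh0
    have hpc : PC p q γ l :=
      ⟨l.takeWhile (Pb q), l.dropWhile (Pb q), hab.symm, hane, haq,
        by rw [hbcons, hγ]; rfl, hbq⟩
    obtain ⟨_, _, hcN⟩ := hfacts γ l hl hpc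
    exact Or.inr (Or.inr ⟨γ, Finset.mem_range.mpr hcN, Finset.mem_filter.mpr ⟨hlF, hpc⟩⟩)
  have hlne : ∀ l ∈ Omega p q U, l ≠ [] := by
    intro l hl hnil
    rw [hnil] at hl
    have h9 := hl.2.2
    simp at h9
    omega
  have hdAB : Disjoint FA FB := by
    rw [Finset.disjoint_left]
    intro l hlA hlB
    obtain ⟨hlF, hA⟩ := Finset.mem_filter.mp hlA
    obtain ⟨_, hB⟩ := Finset.mem_filter.mp hlB
    have hl := (hmemF l).mp hlF
    obtain ⟨h0, t0, rfl⟩ : ∃ h0 t0, l = h0 :: t0 := by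
      cases l with
      | nil => exact absurd rfl (hlne _ hl)
      | cons h0 t0 => exact ⟨h0, t0, rfl⟩
    exact hA h0 (by simp) (hB h0 (by simp))
  have hdAC : ∀ c, Disjoint FA (FC c) := by
    intro c
    rw [Finset.disjoint_left]
    intro l hlA hlC
    obtain ⟨hlF, hA⟩ := Finset.mem_filter.mp hlA
    obtain ⟨_, a, b, hab, hane, haq, hbh, hbq⟩ := Finset.mem_filter.mp hlC
    obtain ⟨w, a', rfl⟩ : ∃ w a', a = w :: a' := by
      cases a with
      | nil => exact absurd rfl hane
      | cons w a' => exact ⟨w, a', rfl⟩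
    exact hA w (by rw [hab]; simp) (haq w (by simp))
  have hdBC : ∀ c, Disjoint FB (FC c) := by
    intro c
    rw [Finset.disjoint_left]
    intro l hlB hlC
    obtain ⟨hlF, hB⟩ := Finset.mem_filter.mp hlB
    obtain ⟨_, a, b, hab, hane, haq, hbh, hbq⟩ := Finset.mem_filter.mp hlC
    obtain ⟨h0, t0, rfl⟩ : ∃ h0 t0, b = h0 :: t0 := by
      cases b with
      | nil => simp at hbh
      | cons h0 t0 => exact ⟨h0, t0, rfl⟩
    exact hbq h0 (by simp) (hB h0 (by rw [hab]; exact List.mem_append_right _ (by simp)))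
  have hdCC : ∀ c c', c ≠ c' → Disjoint (FC c) (FC c') := by
    intro c c' hne
    rw [Finset.disjoint_left]
    intro l h1 h2
    obtain ⟨hlF, a, b, hab, hane, haq, hbh, hbq⟩ := Finset.mem_filter.mp h1
    obtain ⟨_, a', b', hab', hane', haq', hbh', hbq'⟩ := Finset.mem_filter.mp h2
    have hsplit := split_unique (P := fun x => q ∣ x) a b a' b' (by rw [← hab, ← hab']) haq haq'
      (fun h hh => by
        rw [hbh] at hh
        simp only [Option.mem_def, Option.some.injEq] at hh
        subst hh
        exact not_q_dvd_pow hq hpq c)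
      (fun h hh => by
        rw [hbh'] at hh
        simp only [Option.mem_def, Option.some.injEq] at hh
        subst hh
        exact not_q_dvd_pow hq hpq c')
    have hbb : b = b' := hsplit.2
    rw [hbb, hbh'] at hbh
    have hpp : p ^ c' = p ^ c := by
      simpa using hbh
    exact hne (Nat.pow_right_injective (by omega) hpp.symm)
  have hFeq : F = FA ∪ (FB ∪ (Finset.range N).biUnion FC) := by
    ext l
    simp only [Finset.mem_union, Finset.mem_biUnion]
    constructor
    · intro hlF
      rcases hcov l hlF with h | h | ⟨c, hc1, hc2⟩
      · exact Or.inl h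
      · exact Or.inr (Or.inl h)
      · exact Or.inr (Or.inr ⟨c, hc1, hc2⟩)
    · rintro (h | h | ⟨c, _, h⟩)
      · exact (Finset.mem_filter.mp h).1
      · exact (Finset.mem_filter.mp h).1
      · exact (Finset.mem_filter.mp h).1
  have hdisj1 : Disjoint FA (FB ∪ (Finset.range N).biUnion FC) := by
    rw [Finset.disjoint_union_right]
    refine ⟨hdAB, ?_⟩
    rw [Finset.disjoint_biUnion_right]
    exact fun c _ => hdAC c
  have hdisj2 : Disjoint FB ((Finset.range N).biUnion FC) := by
    rw [Finset.disjoint_biUnion_right]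
    exact fun c _ => hdBC c
  have hcard : F.card = FA.card + (FB.card + ∑ c ∈ Finset.range N, (FC c).card) := by
    rw [hFeq, Finset.card_union_of_disjoint hdisj1, Finset.card_union_of_disjoint hdisj2,
      Finset.card_biUnion (fun c _ c' _ h => hdCC c c' h)]
  have hWF : W p q U = F.card := by
    rw [W, Set.ncard_eq_toFinset_card _ hfin]
  have hAcard : FA.card = Wp p U := by
    have hcoe : (↑FA : Set (List ℕ)) = {l | l ∈ Omega p q U ∧ ∀ x ∈ l, ¬ q ∣ x} := by
      ext l
      simp only [hFA, Finset.coe_filter, Set.mem_setOf_eq, hmemF l]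
    rw [← Set.ncard_coe_finset, hcoe, ncard_A hp hq hpq]
  have hBcard : FB.card = if q ∣ U then W p q (U / q) else 0 := by
    have hcoe : (↑FB : Set (List ℕ)) = {l | l ∈ Omega p q U ∧ ∀ x ∈ l, q ∣ x} := by
      ext l
      simp only [hFB, Finset.coe_filter, Set.mem_setOf_eq, hmemF l]
    rw [← Set.ncard_coe_finset, hcoe, ncard_B hp hq hpq]
  have hCcard : ∀ c ∈ Finset.range N, (FC c).card = delta p q c U * W p q (U / (p ^ c * q)) := by
    intro c hc
    have hcoe : (↑(FC c) : Set (List ℕ)) = {l | l ∈ Omega p q U ∧ PC p q c l} := by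
      ext l
      simp only [hFC, Finset.coe_filter, Set.mem_setOf_eq, hmemF l]
    by_cases hδ : (U / p ^ c) % q = 1 ∧ Wp p (U % p ^ c) = 1
    · have hU3 : p ^ c * (q + 1) ≤ U := by
        have hc' := Finset.mem_range.mp hc
        rw [hN] at hc'
        split at hc'
        · omega
        · rename_i hUlt
          push_neg at hUlt
          have h6 : U / (q + 1) ≠ 0 := by
            have := Nat.div_pos hUlt (by omega)
            omega
          have h5 : p ^ c ≤ U / (q + 1) := (Nat.le_log_iff_pow_le hp h6).mp (by omega)
          exact (Nat.le_div_iff_mul_le (by omega)).mp h5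
      rw [delta, if_pos hδ, one_mul, ← Set.ncard_coe_finset, hcoe,
        C_card hp hq hpq hδ.1 hδ.2 hU3]
    · rw [delta, if_neg hδ, zero_mul, ← Set.ncard_coe_finset, hcoe]
      have hempty : {l | l ∈ Omega p q U ∧ PC p q c l} = ∅ := by
        ext l
        simp only [Set.mem_setOf_eq, Set.mem_empty_iff_false, iff_false]
        rintro ⟨hl, hpc⟩
        obtain ⟨h1, h2, _⟩ := C_facts hp hq hpq hl hpc
        exact hδ ⟨h1, h2⟩
      rw [hempty, Set.ncard_empty]
  rw [hWF, hcard, hAcard, hBcard, Finset.sum_congr rfl hCcard]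
  omega

end SCP7

theorem W_general_relation (p q : ℕ) (hp : 1 < p) (hq : 1 < q) (hpq : Nat.Coprime p q)
    (U : ℕ) (hU : 1 ≤ U) :
    W p q U = Wp p U + (if q ∣ U then W p q (U / q) else 0) +
      ∑ c ∈ Finset.range (if U < q + 1 then 0 else Nat.log p (U / (q + 1)) + 1),
        delta p q c U * W p q (U / (p ^ c * q)) := by
  exact SCP7.main hp hq hpq U hU
end

section
/- Assume p < q and let N = ⌊log_p(q − (q−1)/p)⌋ (logarithm in base p of the real number q − (q−1)/p). Then for all nonnegative integers U and c, if δ_{p,q}(c,U) = 1 then δ_{p,q}(c+k,U) = 0 for every integer k with k ≥ −c and 0 < |k| ≤ N. -/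
lemma wp_one {p n : ℕ} (h : Wp p n = 1) : ∀ d ∈ Nat.digits p n, d ≤ 1 := by
  by_contra hc
  simp [Wp, hc] at h

lemma digits_tail_le (p : ℕ) (hp : 1 < p) (n : ℕ) (h : ∀ d ∈ Nat.digits p n, d ≤ 1) :
    ∀ d ∈ Nat.digits p (n / p), d ≤ 1 := by
  intro d hd
  rcases Nat.eq_zero_or_pos n with h0 | h0
  · simp [h0] at hd
  · apply h
    rw [Nat.digits_def' hp h0]
    exact List.mem_cons_of_mem _ hd

lemma digits_div_pow_le (p : ℕ) (hp : 1 < p) (n j : ℕ) (h : ∀ d ∈ Nat.digits p n, d ≤ 1) :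
    ∀ d ∈ Nat.digits p (n / p ^ j), d ≤ 1 := by
  induction j with
  | zero => simpa using h
  | succ j ih =>
    have : n / p ^ (j + 1) = n / p ^ j / p := by
      rw [Nat.div_div_eq_div_mul, pow_succ]
    rw [this]
    exact digits_tail_le p hp _ ih

lemma digit_sum_bound (p : ℕ) (hp : 1 < p) :
    ∀ m, (∀ d ∈ Nat.digits p m, d ≤ 1) → m * (p - 1) + 1 ≤ p ^ (Nat.digits p m).length := by
  intro m
  induction m using Nat.strong_induction_on with
  | _ m ih =>
    intro h
    rcases Nat.eq_zero_or_pos m with h0 | h0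
    · simp [h0]
    · obtain ⟨r, hr⟩ : ∃ r, p = r + 2 := ⟨p - 2, by omega⟩
      rw [Nat.digits_def' hp h0] at h ⊢
      have hd : m % p ≤ 1 := h _ List.mem_cons_self
      have ihm := ih (m / p) (Nat.div_lt_self h0 (by omega))
        (fun d hd' => h d (List.mem_cons_of_mem _ hd'))
      simp only [List.length_cons, pow_succ]
      have heq : m = p * (m / p) + m % p := (Nat.div_add_mod m p).symm
      subst hr
      have hsub : r + 2 - 1 = r + 1 := rfl
      rw [hsub] at ihm ⊢
      have hv : m % (r + 2) * (r + 1) ≤ r + 1 := by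
        calc m % (r + 2) * (r + 1) ≤ 1 * (r + 1) := Nat.mul_le_mul_right _ hd
          _ = r + 1 := one_mul _
      set L := ((r + 2).digits (m / (r + 2))).length with hL
      calc m * (r + 1) + 1
          = (r + 2) * (m / (r + 2)) * (r + 1) + m % (r + 2) * (r + 1) + 1 := by
            nth_rewrite 1 [heq]; ring
        _ ≤ (r + 2) * (m / (r + 2)) * (r + 1) + (r + 1) + 1 := by
            have := hv; omega
        _ = (r + 2) * (m / (r + 2) * (r + 1) + 1) := by ring
        _ ≤ (r + 2) * (r + 2) ^ L := Nat.mul_le_mul_left _ ihm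
        _ = (r + 2) ^ L * (r + 2) := by ring

lemma key_lemma (p q : ℕ) (hp : 1 < p) (hq : 1 < q) (U a b : ℕ) (hab : a < b)
    (hbound : p ^ (b - a + 1) + q ≤ p * q + 1)
    (h1 : (U / p ^ a) % q = 1) (h2 : (U / p ^ b) % q = 1)
    (hw : ∀ d ∈ Nat.digits p (U % p ^ b), d ≤ 1) : False := by
  set k := b - a with hk0
  have hk : 0 < k := by omega
  have hb : b = a + k := by omega
  set s := U / p ^ a with hs
  set A := U / p ^ b with hA0
  have hA : A = s / p ^ k := by
    rw [hA0, hs, hb, pow_add, Nat.div_div_eq_div_mul]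
  set m := s % p ^ k with hm
  have hsm : p ^ k * A + m = s := by rw [hA, hm]; exact Nat.div_add_mod s (p ^ k)
  have hmdiv : m = (U % p ^ b) / p ^ a := by
    rw [hm, hs, ← Nat.mod_mul_right_div_self, ← pow_add, ← hb]
  -- digits of m are ≤ 1
  have hdm : ∀ d ∈ Nat.digits p m, d ≤ 1 := by
    rw [hmdiv]; exact digits_div_pow_le p hp _ a hw
  have hmlt : m < p ^ k := Nat.mod_lt _ (pow_pos (by omega) k)
  have hlen : (Nat.digits p m).length ≤ k := by
    rcases Nat.eq_zero_or_pos m with h0 | h0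
    · simp [h0]
    · rw [Nat.digits_len p m hp (by omega)]
      have := Nat.log_lt_of_lt_pow (by omega : m ≠ 0) hmlt
      omega
  have hmb : m * (p - 1) + 1 ≤ p ^ k :=
    le_trans (digit_sum_bound p hp m hdm) (Nat.pow_le_pow_right (by omega) hlen)
  -- mod arithmetic
  have e1 : A ≡ 1 [MOD q] := by
    show A % q = 1 % q
    rw [h2, Nat.mod_eq_of_lt hq]
  have e2 : p ^ k * A + m ≡ p ^ k * 1 + m [MOD q] :=
    Nat.ModEq.add_right m (Nat.ModEq.mul_left _ e1)
  have hmodeq : (p ^ k + m) % q = 1 := by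
    have : (p ^ k * 1 + m) % q = s % q := by rw [← hsm]; exact e2.symm
    rw [mul_one] at this
    rw [this, h1]
  -- size bound
  have hsize : p ^ k + m ≤ q := by
    obtain ⟨r, hr⟩ : ∃ r, p = r + 2 := ⟨p - 2, by omega⟩
    have hb1 : p ^ (k + 1) + q ≤ p * q + 1 := hbound
    have hps : p ^ (k + 1) = p * p ^ k := by ring
    have hmul : (p ^ k + m) * (p - 1) ≤ q * (p - 1) := by
      subst hr
      have hsub : r + 2 - 1 = r + 1 := rfl
      rw [hsub] at hmb ⊢
      rw [hps] at hb1
      nlinarith [hmb, hb1]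
    exact Nat.le_of_mul_le_mul_right hmul (by omega)
  have hge : 2 ≤ p ^ k + m := by
    have h2p : 2 ≤ p ^ k := le_trans hp (Nat.le_self_pow (by omega) p)
    exact le_trans h2p (Nat.le_add_right _ _)
  rcases lt_or_eq_of_le hsize with hlt | heq
  · rw [Nat.mod_eq_of_lt hlt] at hmodeq
    rw [hmodeq] at hge
    exact absurd hge (by norm_num)
  · rw [heq, Nat.mod_self] at hmodeq
    exact absurd hmodeq (by norm_num)

lemma bound_lemma (p q N : ℕ) (hp : 1 < p) (hpq' : p < q)
    (hN : N = ⌊Real.logb p ((q : ℝ) - ((q : ℝ) - 1) / (p : ℝ))⌋₊) (j : ℕ) (hj : j ≤ N) :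
    p ^ (j + 1) + q ≤ p * q + 1 := by
  set x : ℝ := (q : ℝ) - ((q : ℝ) - 1) / (p : ℝ) with hx
  have hp' : (1 : ℝ) < p := by exact_mod_cast hp
  have hq1 : (1 : ℝ) ≤ q := by
    have : (1 : ℕ) ≤ q := by omega
    exact_mod_cast this
  have hdle : ((q : ℝ) - 1) / (p : ℝ) ≤ (q : ℝ) - 1 :=
    div_le_self (by linarith) (by linarith)
  have hx1 : (1 : ℝ) ≤ x := by rw [hx]; linarith
  have hlog : (N : ℝ) ≤ Real.logb p x := by
    rw [hN]; exact Nat.floor_le (Real.logb_nonneg hp' hx1)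
  have hpN : (p : ℝ) ^ N ≤ x := by
    calc (p : ℝ) ^ N = (p : ℝ) ^ (N : ℝ) := (Real.rpow_natCast _ _).symm
      _ ≤ (p : ℝ) ^ Real.logb p x :=
          Real.rpow_le_rpow_of_exponent_le (le_of_lt hp') hlog
      _ = x := Real.rpow_logb (by linarith) (by linarith) (by linarith)
  have hpj : (p : ℝ) ^ j ≤ x :=
    le_trans (pow_le_pow_right₀ (le_of_lt hp') hj) hpN
  have hpx : (p : ℝ) * x = p * q - (q - 1) := by
    rw [hx]; field_simp
  have hfin : ((p : ℝ)) ^ (j + 1) + q ≤ p * q + 1 := by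
    have := mul_le_mul_of_nonneg_left hpj (by linarith : (0 : ℝ) ≤ p)
    rw [pow_succ]
    nlinarith [this, hpx]
  exact_mod_cast hfin

theorem delta_vanishing (p q : ℕ) (hp : 1 < p) (hpq' : p < q) (hpq : Nat.Coprime p q)
    (N : ℕ) (hN : N = ⌊Real.logb p ((q : ℝ) - ((q : ℝ) - 1) / (p : ℝ))⌋₊)
    (U c : ℕ) (h : delta p q c U = 1) :
    ∀ k : ℤ, -(c : ℤ) ≤ k → 0 < |k| → |k| ≤ (N : ℤ) →
      delta p q ((c : ℤ) + k).toNat U = 0 := by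
  intro k hk1 hk2 hk3
  have hq : 1 < q := lt_trans hp hpq'
  rw [delta] at h
  split_ifs at h with hc
  rw [delta]
  rw [if_neg]
  rintro ⟨h1', h2'⟩
  rcases lt_trichotomy k 0 with hneg | hzero | hpos
  · -- k < 0 : a = (c+k).toNat < c = b
    set a := ((c : ℤ) + k).toNat with ha
    have haa : a < c := by omega
    have hj : c - a ≤ N := by
      rw [abs_of_neg hneg] at hk3
      omega
    exact key_lemma p q hp hq U a c haa
      (bound_lemma p q N hp hpq' hN (c - a) hj) h1' hc.1 (wp_one hc.2)
  · rw [hzero, abs_zero] at hk2; exact absurd hk2 (by norm_num)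
  · -- k > 0 : a = c < b = (c+k).toNat
    set b := ((c : ℤ) + k).toNat with hb
    have hbb : c < b := by omega
    have hj : b - c ≤ N := by
      rw [abs_of_pos hpos] at hk3
      omega
    exact key_lemma p q hp hq U c b hbb
      (bound_lemma p q N hp hpq' hN (b - c) hj) hc.1 h1' (wp_one h2')
end

section
/- Assume p = 2. Then for all nonnegative integers a and U, W(2^a·q·(2U+1) − 1) = W(qU + (q−1)/2). -/
namespace SCAux

instance : IsTrans ℕ (fun x y => y ∣ x ∧ y < x) :=
  ⟨fun _ _ _ h1 h2 => ⟨h2.1.trans h1.1, h2.2.trans h1.2⟩⟩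

lemma getLast_dvd_of_chain' :
    ∀ (l : List ℕ), l.Chain' (fun x y => y ∣ x ∧ y < x) → ∀ (hne : l ≠ []),
      ∀ x ∈ l, l.getLast hne ∣ x := by
  intro l
  induction l with
  | nil => intro _ hne; exact absurd rfl hne
  | cons a t ih =>
    intro hc hne x hx
    cases t with
    | nil =>
      simp only [List.mem_singleton] at hx
      subst hx; simp [List.getLast]
    | cons b t2 =>
      have h1 : b ∣ a ∧ b < a := (List.isChain_cons_cons.mp hc).1
      have hc2 : (b :: t2).Chain' (fun x y => y ∣ x ∧ y < x) := (List.isChain_cons_cons.mp hc).2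
      have hne2 : (b :: t2) ≠ [] := by simp
      have hl : (a :: b :: t2).getLast hne = (b :: t2).getLast hne2 := List.getLast_cons hne2
      rw [hl]
      rcases List.mem_cons.mp hx with rfl | hx2
      · exact (ih hc2 hne2 b (by simp)).trans h1.1
      · exact ih hc2 hne2 x hx2

lemma pos_of_form {q x : ℕ} (hq : 0 < q) (h : ∃ a b : ℕ, x = 2 ^ a * q ^ b) : 0 < x := by
  obtain ⟨a, b, rfl⟩ := h
  positivity

lemma sum_map_two (l : List ℕ) : (l.map (fun x => 2 * x)).sum = 2 * l.sum := by
  induction l with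
  | nil => simp
  | cons a t ih => simp [ih]; ring

/-- If a member of an SC-partition is odd and ≠ 1, it is divisible by `q`. -/
lemma q_dvd_of_odd {q x : ℕ} (hqo : ¬ 2 ∣ q) (hx : ∃ a b : ℕ, x = 2 ^ a * q ^ b)
    (h2 : ¬ 2 ∣ x) (h1 : x ≠ 1) : q ∣ x := by
  obtain ⟨i, j, rfl⟩ := hx
  rcases Nat.eq_zero_or_pos i with hi | hi
  · subst hi
    rcases Nat.eq_zero_or_pos j with hj | hj
    · subst hj; simp at h1
    · simpa using dvd_pow_self q hj.ne'
  · exfalso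
    exact h2 (((dvd_pow_self 2 hi.ne')).mul_right _)

lemma omegaStar_empty {q : ℕ} (hq : 1 < q) (hqo : ¬ 2 ∣ q) {V : ℕ} (hV : V ≠ 0)
    (hVo : ¬ 2 ∣ V) (hVq : ¬ q ∣ V) : OmegaStar 2 q V = ∅ := by
  ext l
  simp only [Set.mem_empty_iff_false, iff_false]
  rintro ⟨⟨hform, hchain, hsum⟩, h1⟩
  have hne : l ≠ [] := by rintro rfl; simp at hsum; omega
  have hd := getLast_dvd_of_chain' l hchain hne
  have hdmem : l.getLast hne ∈ l := List.getLast_mem hne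
  have hdsum : l.getLast hne ∣ V := hsum ▸ List.dvd_sum hd
  have hd2 : ¬ 2 ∣ l.getLast hne := fun h => hVo (h.trans hdsum)
  have hdq : q ∣ l.getLast hne :=
    q_dvd_of_odd hqo (hform _ hdmem) hd2 (fun h => h1 (h ▸ hdmem))
  exact hVq (hdq.trans hdsum)

lemma omega_eq_union {q : ℕ} (hq : 1 < q) {V : ℕ} (hV : V ≠ 0) :
    Omega 2 q V = OmegaStar 2 q V ∪ (fun l => l ++ [1]) '' OmegaStar 2 q (V - 1) := by
  have hq0 : 0 < q := by omega
  ext l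
  constructor
  · intro hl
    by_cases h1 : 1 ∈ l
    · right
      obtain ⟨hform, hchain, hsum⟩ := hl
      have hne : l ≠ [] := by rintro rfl; simp at h1
      have hlast : l.getLast hne = 1 :=
        Nat.dvd_one.mp (getLast_dvd_of_chain' l hchain hne 1 h1)
      have hsplit : l.dropLast ++ [1] = l := by
        conv_rhs => rw [← List.dropLast_append_getLast hne]
        rw [hlast]
      refine ⟨l.dropLast, ⟨⟨?_, ?_, ?_⟩, ?_⟩, hsplit⟩
      · exact fun x hx => hform x (List.dropLast_subset l hx)
      · rw [← hsplit] at hchain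
        exact (List.isChain_append.mp hchain).1
      · rw [← hsplit] at hsum
        simp at hsum
        omega
      · have hp : l.Pairwise (fun x y => y ∣ x ∧ y < x) := List.isChain_iff_pairwise.mp hchain
        rw [← hsplit] at hp
        intro hmem
        have h2 := ((List.pairwise_append.mp hp).2.2) 1 hmem 1 (by simp)
        exact absurd h2.2 (lt_irrefl 1)
    · left; exact ⟨hl, h1⟩
  · rintro (⟨h, _⟩ | ⟨l', ⟨⟨hform, hchain, hsum⟩, h1⟩, rfl⟩)
    · exact h
    · refine ⟨?_, ?_, ?_⟩
      · intro x hx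
        rcases List.mem_append.mp hx with h | h
        · exact hform x h
        · simp only [List.mem_singleton] at h
          subst h; exact ⟨0, 0, by norm_num⟩
      · show List.IsChain (fun x y => y ∣ x ∧ y < x) (l' ++ [1])
        rw [List.isChain_append]
        refine ⟨hchain, List.isChain_singleton 1, ?_⟩
        intro x hx y hy
        simp only [List.head?_cons, Option.mem_some_iff] at hy
        subst hy
        have hxl : x ∈ l' := List.mem_of_mem_getLast? hx
        have hpos : 0 < x := pos_of_form hq0 (hform x hxl)
        have hx1 : x ≠ 1 := fun h => h1 (h ▸ hxl)
        exact ⟨one_dvd x, by omega⟩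
      · simp only [List.sum_append, List.sum_singleton, hsum]
        omega

lemma omegaStar_two_mul {q : ℕ} (hq : 1 < q) (hqo : ¬ 2 ∣ q) {M : ℕ} (hqM : ¬ q ∣ 2 * M) :
    OmegaStar 2 q (2 * M) = (List.map (fun x => 2 * x)) '' Omega 2 q M := by
  have hq0 : 0 < q := by omega
  ext l
  constructor
  · rintro ⟨⟨hform, hchain, hsum⟩, h1⟩
    by_cases hne : l = []
    · subst hne
      simp only [List.sum_nil] at hsum
      refine ⟨[], ⟨by simp, List.isChain_nil, by simp; omega⟩, by simp⟩
    · have hd := getLast_dvd_of_chain' l hchain hne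
      have hdmem : l.getLast hne ∈ l := List.getLast_mem hne
      have hdsum : l.getLast hne ∣ 2 * M := hsum ▸ List.dvd_sum hd
      have hd2 : 2 ∣ l.getLast hne := by
        by_contra h2
        exact hqM ((q_dvd_of_odd hqo (hform _ hdmem) h2 (fun h => h1 (h ▸ hdmem))).trans hdsum)
      have heven : ∀ x ∈ l, 2 ∣ x := fun x hx => hd2.trans (hd x hx)
      have hl : (l.map (fun x => x / 2)).map (fun x => 2 * x) = l := by
        rw [List.map_map]
        have := List.map_congr_left (l := l)
          (f := (fun x => 2 * x) ∘ (fun x => x / 2)) (g := id)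
          (fun x hx => Nat.mul_div_cancel' (heven x hx))
        simpa using this
      refine ⟨l.map (fun x => x / 2), ⟨?_, ?_, ?_⟩, hl⟩
      · intro x hx
        obtain ⟨y, hy, rfl⟩ := List.mem_map.mp hx
        obtain ⟨i, j, rfl⟩ := hform y hy
        have h2y : 2 ∣ 2 ^ i * q ^ j := heven _ hy
        have hi : i ≠ 0 := by
          rintro rfl
          simp only [pow_zero, one_mul] at h2y
          exact hqo (Nat.Prime.dvd_of_dvd_pow Nat.prime_two h2y)
        obtain ⟨i', rfl⟩ := Nat.exists_eq_succ_of_ne_zero hi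
        refine ⟨i', j, ?_⟩
        have : 2 ^ (i' + 1) * q ^ j = 2 * (2 ^ i' * q ^ j) := by ring
        rw [this, Nat.mul_div_cancel_left _ (by norm_num)]
      · rw [← hl] at hchain
        have := (List.isChain_map (fun x => 2 * x)).mp hchain
        exact this.imp (fun a b h =>
          ⟨(Nat.mul_dvd_mul_iff_left (by norm_num : (0:ℕ) < 2)).mp h.1, by omega⟩)
      · rw [← hl] at hsum
        rw [sum_map_two] at hsum
        omega
  · rintro ⟨l', ⟨hform, hchain, hsum⟩, rfl⟩
    refine ⟨⟨?_, ?_, ?_⟩, ?_⟩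
    · intro x hx
      obtain ⟨y, hy, rfl⟩ := List.mem_map.mp hx
      obtain ⟨i, j, rfl⟩ := hform y hy
      exact ⟨i + 1, j, by ring⟩
    · exact (List.isChain_map (fun x => 2 * x)).mpr
        (hchain.imp (fun a b h => ⟨mul_dvd_mul_left 2 h.1, by omega⟩))
    · rw [sum_map_two, hsum]
    · intro h
      obtain ⟨y, _, hy⟩ := List.mem_map.mp h
      omega

lemma inj_append_one : Function.Injective (fun l : List ℕ => l ++ [1]) := by
  intro a b h
  simpa using h

lemma inj_map_two : Function.Injective (List.map (fun x : ℕ => 2 * x)) :=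
  List.map_injective_iff.mpr (fun a b h => by omega)

/-- Step for odd numbers: `W (2V+1) = W V` when `q ∤ 2V+1` and `q ∤ V`. -/
lemma key1 {q : ℕ} (hq : 1 < q) (hqo : ¬ 2 ∣ q) {V : ℕ}
    (hV1 : ¬ q ∣ (2 * V + 1)) (hV2 : ¬ q ∣ V) : W 2 q (2 * V + 1) = W 2 q V := by
  have hcop : Nat.Coprime q 2 :=
    Nat.coprime_two_right.mpr (Nat.odd_iff.mpr (by omega))
  have hq2V : ¬ q ∣ 2 * V := fun h => hV2 (hcop.dvd_of_dvd_mul_left h)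
  have hstar : OmegaStar 2 q (2 * V + 1) = ∅ :=
    omegaStar_empty hq hqo (by omega) (by omega) hV1
  have h1 : Omega 2 q (2 * V + 1)
      = (fun l => l ++ [1]) '' OmegaStar 2 q (2 * V) := by
    rw [omega_eq_union hq (by omega), hstar]
    simp
  have h2 : OmegaStar 2 q (2 * V) = (List.map (fun x => 2 * x)) '' Omega 2 q V :=
    omegaStar_two_mul hq hqo hq2V
  unfold W
  rw [h1, h2, Set.ncard_image_of_injective _ inj_append_one,
    Set.ncard_image_of_injective _ inj_map_two]

/-- Step for even numbers: `W (2M) = W M` when `q ∤ 2M`, `q ∤ 2M - 1`, `M ≠ 0`. -/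
lemma key2 {q : ℕ} (hq : 1 < q) (hqo : ¬ 2 ∣ q) {M : ℕ} (hM0 : M ≠ 0)
    (hM1 : ¬ q ∣ 2 * M) (hM2 : ¬ q ∣ (2 * M - 1)) : W 2 q (2 * M) = W 2 q M := by
  have hstar : OmegaStar 2 q (2 * M - 1) = ∅ :=
    omegaStar_empty hq hqo (by omega) (by omega) hM2
  have h1 : Omega 2 q (2 * M) = OmegaStar 2 q (2 * M) := by
    rw [omega_eq_union hq (by omega), hstar]
    simp
  have h2 : OmegaStar 2 q (2 * M) = (List.map (fun x => 2 * x)) '' Omega 2 q M :=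
    omegaStar_two_mul hq hqo hM1
  unfold W
  rw [h1, h2, Set.ncard_image_of_injective _ inj_map_two]

end SCAux

theorem W_reduction_p_eq_two (q : ℕ) (hq : 1 < q) (hq2 : Nat.Coprime 2 q)
    (a U : ℕ) :
    W 2 q (2 ^ a * q * (2 * U + 1) - 1) = W 2 q (q * U + (q - 1) / 2) := by
  have hqo : ¬ 2 ∣ q := by
    intro h
    have := Nat.eq_one_of_dvd_coprimes hq2 (dvd_refl 2) h
    omega
  induction a with
  | zero =>
    set M := q * U + (q - 1) / 2 with hM
    have hexp : q * (2 * U + 1) = 2 * (q * U) + q := by ring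
    have h2M : 2 ^ 0 * q * (2 * U + 1) - 1 = 2 * M := by
      simp only [pow_zero, one_mul]
      omega
    rw [h2M]
    have hq1 : q ∣ q * (2 * U + 1) := Dvd.intro _ rfl
    have hM1 : ¬ q ∣ 2 * M := by
      intro h
      have h1 : q ∣ q * (2 * U + 1) - 2 * M := Nat.dvd_sub hq1 h
      have h2 : q * (2 * U + 1) - 2 * M = 1 := by omega
      rw [h2] at h1
      have := Nat.le_of_dvd one_pos h1
      omega
    have hM2 : ¬ q ∣ 2 * M - 1 := by
      intro h
      have h1 : q ∣ q * (2 * U + 1) - (2 * M - 1) := Nat.dvd_sub hq1 h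
      have h2 : q * (2 * U + 1) - (2 * M - 1) = 2 := by omega
      rw [h2] at h1
      have := Nat.le_of_dvd (by norm_num) h1
      interval_cases q
      · exact hqo h1
    exact SCAux.key2 hq hqo (by omega) hM1 hM2
  | succ a ih =>
    set X := 2 ^ a * q * (2 * U + 1) with hX
    have hXq : q ∣ X := ⟨2 ^ a * (2 * U + 1), by ring⟩
    have hXpos : 1 ≤ X := by
      have h1 : 0 < 2 ^ a := by positivity
      have : 0 < X := by
        rw [hX]; exact Nat.mul_pos (Nat.mul_pos h1 (by omega)) (by omega)
      omega
    have hexp : 2 ^ (a + 1) * q * (2 * U + 1) = 2 * X := by rw [hX]; ring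
    have hN : 2 ^ (a + 1) * q * (2 * U + 1) - 1 = 2 * (X - 1) + 1 := by omega
    rw [hN]
    have hV1 : ¬ q ∣ 2 * (X - 1) + 1 := by
      intro h
      have h1 : q ∣ 2 * X - (2 * (X - 1) + 1) := Nat.dvd_sub (Dvd.dvd.mul_left hXq 2) h
      have h2 : 2 * X - (2 * (X - 1) + 1) = 1 := by omega
      rw [h2] at h1
      have := Nat.le_of_dvd one_pos h1
      omega
    have hV2 : ¬ q ∣ X - 1 := by
      intro h
      have h1 : q ∣ X - (X - 1) := Nat.dvd_sub hXq h
      have h2 : X - (X - 1) = 1 := by omega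
      rw [h2] at h1
      have := Nat.le_of_dvd one_pos h1
      omega
    rw [SCAux.key1 hq hqo hV1 hV2]
    exact ih
end

section
/- If there exists a nonnegative integer U₀ with W(U₀) ≥ 2, then the sequence W is unbounded: for every n there exists a nonnegative integer U with W(U) ≥ n. Equivalently, W is either {0,1}-valued or unbounded. -/
-- elements are positive
lemma sc_pos {p q U : ℕ} (hp : 1 < p) (hq : 1 < q) {l : List ℕ}
    (hl : l ∈ Omega p q U) : ∀ x ∈ l, 1 ≤ x := by
  intro x hx
  obtain ⟨a, b, rfl⟩ := hl.1 x hx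
  exact Nat.one_le_iff_ne_zero.mpr (by positivity)

-- elements are at most U
lemma sc_le {p q U : ℕ} (hp : 1 < p) (hq : 1 < q) {l : List ℕ}
    (hl : l ∈ Omega p q U) : ∀ x ∈ l, x ≤ U := by
  intro x hx
  have := List.single_le_sum (l := l) (fun y _ => Nat.zero_le y) x hx
  rw [hl.2.2] at this; exact this

lemma sc_dvd {p q U : ℕ} (hp : 1 < p) (hq : 1 < q) {l : List ℕ}
    (hl : l ∈ Omega p q U) : ∀ x ∈ l, x ∣ (p * q) ^ U := by
  intro x hx
  obtain ⟨a, b, hab⟩ := hl.1 x hx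
  have hxU : x ≤ U := sc_le hp hq hl x hx
  have hpa : p ^ a ≤ x := by rw [hab]; exact Nat.le_mul_of_pos_right _ (by positivity)
  have hqb : q ^ b ≤ x := by rw [hab]; exact Nat.le_mul_of_pos_left _ (by positivity)
  have ha : a ≤ U := by
    have h1 : a < 2 ^ a := Nat.lt_two_pow_self (n := a)
    have h2 : 2 ^ a ≤ p ^ a := Nat.pow_le_pow_left hp a
    omega
  have hb : b ≤ U := by
    have h1 : b < 2 ^ b := Nat.lt_two_pow_self (n := b)
    have h2 : 2 ^ b ≤ q ^ b := Nat.pow_le_pow_left hq b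
    omega
  rw [hab, mul_pow]
  exact mul_dvd_mul (pow_dvd_pow p ha) (pow_dvd_pow q hb)

-- a strictly decreasing list with elements < N is a sublist of (range N).reverse
lemma sorted_sublist_range : ∀ (N : ℕ) (l : List ℕ), l.Pairwise (· > ·) →
    (∀ x ∈ l, x < N) → l.Sublist (List.range N).reverse := by
  intro N
  induction N with
  | zero =>
    intro l _ hb
    cases l with
    | nil => simp
    | cons a t => exact absurd (hb a (by simp)) (by omega)
  | succ N ih =>
    intro l hs hb
    have hrev : (List.range (N + 1)).reverse = N :: (List.range N).reverse := by
      rw [List.range_succ, List.reverse_append]; simp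
    rw [hrev]
    cases l with
    | nil => simp
    | cons a t =>
      have hta : ∀ x ∈ t, x < a := fun x hx => (List.pairwise_cons.mp hs).1 x hx
      by_cases haN : a = N
      · subst haN
        exact List.Sublist.cons₂ a (ih t (hs.sublist (List.sublist_cons_self a t))
          (fun x hx => lt_of_lt_of_le (hta x hx) (Nat.le_of_lt_succ (hb a (by simp)))))
      · have haN' : a < N := by have := hb a (by simp); omega
        exact List.Sublist.cons N (ih (a :: t) hs
          (fun x hx => by rcases List.mem_cons.mp hx with rfl | hx; · exact haN'
                          · exact lt_trans (hta x hx) haN'))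

lemma omega_finite (p q : ℕ) (hp : 1 < p) (hq : 1 < q) (U : ℕ) :
    (Omega p q U).Finite := by
  apply Set.Finite.subset (List.finite_toSet ((List.range (U + 1)).reverse.sublists))
  intro l hl
  simp only [Set.mem_setOf_eq, List.mem_sublists]
  apply sorted_sublist_range
  · have h1 : List.Chain' (· > ·) l := hl.2.1.imp (fun a b hab => hab.2)
    exact List.isChain_iff_pairwise.mp h1
  · intro x hx
    exact Nat.lt_succ_of_le (sc_le hp hq hl x hx)

-- decoding: filter recovers the tail
lemma filter_decode (s : ℕ) (m l : List ℕ) (hm : ∀ x ∈ m, 1 ≤ x)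
    (hl : ∀ x ∈ l, x < s) :
    (m.map (s * ·) ++ l).filter (fun x => decide (x < s)) = l := by
  rw [List.filter_append, List.filter_eq_nil_iff.mpr, List.filter_eq_self.mpr, List.nil_append]
  · intro x hx; simpa using hl x hx
  · intro x hx
    simp only [List.mem_map] at hx
    obtain ⟨y, hy, rfl⟩ := hx
    have : s ≤ s * y := Nat.le_mul_of_pos_right s (hm y hy)
    simp; omega

lemma decode {s : ℕ} (hs : 0 < s) {m m' l l' : List ℕ}
    (hm : ∀ x ∈ m, 1 ≤ x) (hm' : ∀ x ∈ m', 1 ≤ x)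
    (hl : ∀ x ∈ l, x < s) (hl' : ∀ x ∈ l', x < s)
    (h : m.map (s * ·) ++ l = m'.map (s * ·) ++ l') :
    m = m' ∧ l = l' := by
  have hll : l = l' := by
    have := congrArg (List.filter (fun x => decide (x < s))) h
    rwa [filter_decode s m l hm hl, filter_decode s m' l' hm' hl'] at this
  subst hll
  have hmm : m.map (s * ·) = m'.map (s * ·) := List.append_cancel_right h
  have hinj : Function.Injective (s * ·) := fun a b hab =>
    Nat.eq_of_mul_eq_mul_left hs hab
  exact ⟨List.map_injective_iff.mpr hinj hmm, rfl⟩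

-- the key construction: scaled block prepended to an existing partition
lemma block_append {p q U₀ U : ℕ} (hp : 1 < p) (hq : 1 < q) (hU : 1 ≤ U)
    {m l : List ℕ} (hm : m ∈ Omega p q U₀) (hl : l ∈ Omega p q U) :
    m.map ((p * q) ^ (U + 1) * ·) ++ l ∈ Omega p q ((p * q) ^ (U + 1) * U₀ + U) := by
  set s := (p * q) ^ (U + 1) with hs_def
  have hpq2 : 2 ≤ p * q := by nlinarith
  have hUs : U < s := by
    calc U < 2 ^ (U + 1) := by have := Nat.lt_two_pow_self (n := U); calc U < 2 ^ U := this
                                _ ≤ 2 ^ (U + 1) := Nat.pow_le_pow_right (by norm_num) (by omega)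
    _ ≤ s := Nat.pow_le_pow_left hpq2 _
  have hdvds : (p * q) ^ U ∣ s := pow_dvd_pow _ (by omega)
  refine ⟨?_, ?_, ?_⟩
  · intro x hx
    rcases List.mem_append.mp hx with hx | hx
    · simp only [List.mem_map] at hx
      obtain ⟨y, hy, rfl⟩ := hx
      obtain ⟨a, b, rfl⟩ := hm.1 y hy
      exact ⟨a + (U + 1), b + (U + 1), by rw [hs_def]; ring⟩
    · exact hl.1 x hx
  · apply List.IsChain.append
    · rw [List.isChain_map]
      apply hm.2.1.imp
      intro a b hab
      have hs0 : 0 < s := by positivity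
      exact ⟨mul_dvd_mul_left s hab.1, Nat.mul_lt_mul_of_le_of_lt (le_refl s) hab.2 hs0⟩
    · exact hl.2.1
    · intro x hx y hy
      obtain ⟨hne, rfl⟩ := List.mem_getLast?_eq_getLast hx
      have hxm : (m.map (s * ·)).getLast hne ∈ m.map (s * ·) := List.getLast_mem hne
      have hyl : y ∈ l := List.mem_of_mem_head? hy
      simp only [List.mem_map] at hxm
      obtain ⟨z, hz, hzx⟩ := hxm
      rw [← hzx]
      have hz1 : 1 ≤ z := sc_pos hp hq hm z hz
      have hsx : s ≤ s * z := Nat.le_mul_of_pos_right s hz1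
      constructor
      · exact dvd_trans (sc_dvd hp hq hl y hyl) (dvd_trans hdvds (Dvd.intro z rfl))
      · have : y ≤ U := sc_le hp hq hl y hyl
        omega
  · rw [List.sum_append, hl.2.2]
    congr 1
    have := List.sum_map_mul_left m id s
    simpa [hm.2.2] using this


theorem W_unbounded_of_two_le (p q : ℕ) (hp : 1 < p) (hq : 1 < q)
    (hpq : Nat.Coprime p q) (h : ∃ U₀ : ℕ, 2 ≤ W p q U₀) :
    ∀ n : ℕ, ∃ U : ℕ, n ≤ W p q U := by
  obtain ⟨U₀, hU₀⟩ := h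
  obtain ⟨m₁, m₂, hm₁, hm₂, hmne⟩ :=
    (Set.one_lt_ncard_iff (omega_finite p q hp hq U₀)).mp (by
      unfold W at hU₀; omega)
  have hU₀pos : 1 ≤ U₀ := by
    by_contra h0
    have hz : U₀ = 0 := by omega
    subst hz
    have key : ∀ m, m ∈ Omega p q 0 → m = [] := by
      intro m hm
      cases m with
      | nil => rfl
      | cons a t =>
        have h1 := sc_pos hp hq hm a (List.mem_cons_self (a := a) (l := t))
        have h2 := hm.2.2
        simp only [List.sum_cons] at h2
        omega
    exact hmne ((key m₁ hm₁).trans (key m₂ hm₂).symm)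
  have main : ∀ n : ℕ, ∃ (U : ℕ) (S : Finset (List ℕ)),
      1 ≤ U ∧ n + 1 ≤ S.card ∧ ∀ l ∈ S, l ∈ Omega p q U := by
    intro n
    induction n with
    | zero =>
      exact ⟨U₀, {m₁}, hU₀pos, by simp, by simpa using hm₁⟩
    | succ n ih =>
      obtain ⟨U, S, hU, hcard, hmem⟩ := ih
      set s := (p * q) ^ (U + 1) with hs_def
      have hs0 : 0 < s := by positivity
      have hUs : U < s := by
        have h1 : U < 2 ^ (U + 1) := by
          have := Nat.lt_two_pow_self (n := U)
          have h2 : (2:ℕ) ^ U ≤ 2 ^ (U + 1) := Nat.pow_le_pow_right (by norm_num) (by omega)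
          omega
        have h2 : 2 ^ (U + 1) ≤ s := Nat.pow_le_pow_left (by nlinarith) _
        omega
      have hlt : ∀ l ∈ S, ∀ x ∈ l, x < s := by
        intro l hl x hx
        have := sc_le hp hq (hmem l hl) x hx
        omega
      refine ⟨s * U₀ + U, S.image (fun l => m₁.map (s * ·) ++ l) ∪
        S.image (fun l => m₂.map (s * ·) ++ l), by omega, ?_, ?_⟩
      · have hc1 : (S.image (fun l => m₁.map (s * ·) ++ l)).card = S.card := by
          apply Finset.card_image_of_injOn
          intro l hl l' hl' hEq
          exact (decode hs0 (sc_pos hp hq hm₁) (sc_pos hp hq hm₁)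
            (hlt l hl) (hlt l' hl') hEq).2
        have hc2 : (S.image (fun l => m₂.map (s * ·) ++ l)).card = S.card := by
          apply Finset.card_image_of_injOn
          intro l hl l' hl' hEq
          exact (decode hs0 (sc_pos hp hq hm₂) (sc_pos hp hq hm₂)
            (hlt l hl) (hlt l' hl') hEq).2
        have hdisj : Disjoint (S.image (fun l => m₁.map (s * ·) ++ l))
            (S.image (fun l => m₂.map (s * ·) ++ l)) := by
          rw [Finset.disjoint_left]
          intro x hx1 hx2
          obtain ⟨l, hl, rfl⟩ := Finset.mem_image.mp hx1
          obtain ⟨l', hl', hEq⟩ := Finset.mem_image.mp hx2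
          exact hmne ((decode hs0 (sc_pos hp hq hm₂) (sc_pos hp hq hm₁)
            (hlt l' hl') (hlt l hl) hEq).1).symm
        rw [Finset.card_union_of_disjoint hdisj, hc1, hc2]
        omega
      · intro l hl
        rcases Finset.mem_union.mp hl with hl | hl
        · obtain ⟨l', hl', rfl⟩ := Finset.mem_image.mp hl
          exact block_append hp hq hU hm₁ (hmem l' hl')
        · obtain ⟨l', hl', rfl⟩ := Finset.mem_image.mp hl
          exact block_append hp hq hU hm₂ (hmem l' hl')
  intro n
  obtain ⟨U, S, hU, hcard, hmem⟩ := main n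
  refine ⟨U, ?_⟩
  have hsub : (↑S : Set (List ℕ)) ⊆ Omega p q U := fun l hl => hmem l hl
  have := Set.ncard_le_ncard hsub (omega_finite p q hp hq U)
  rw [Set.ncard_coe_finset] at this
  unfold W
  omega
end

section
/- Assume p = 2. Then for every integer U ≥ 1, W(qU) ≥ W(qU+1) ≥ W(qU−1); moreover, for every nonnegative integer U and every integer r with 0 ≤ r < q−1, W(qU+r) ≥ W(qU+r+1). -/
namespace SCPaux

local notation "SR" => (fun x y : ℕ => y ∣ x ∧ y < x)

instance : IsTrans ℕ (fun x y : ℕ => y ∣ x ∧ y < x) :=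
  ⟨fun _ _ _ h1 h2 => ⟨h2.1.trans h1.1, h2.2.trans h1.2⟩⟩

variable {q : ℕ}

lemma q_odd (hq2 : Nat.Coprime 2 q) : q % 2 = 1 :=
  Nat.odd_iff.mp (Nat.coprime_two_left.mp hq2)

lemma not_q_dvd_pow2 (hq : 1 < q) (hq2 : Nat.Coprime 2 q) (a : ℕ) : ¬ q ∣ 2 ^ a := by
  intro h
  have := (hq2.symm.pow_right a).eq_one_of_dvd h
  omega

lemma pow2_dvd_cancel (hq2 : Nat.Coprime 2 q) {a c d : ℕ} (h : 2 ^ a ∣ 2 ^ c * q ^ d) :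
    2 ^ a ∣ 2 ^ c :=
  (Nat.Coprime.pow (k := 2) (l := q) a d hq2).dvd_of_dvd_mul_right h

lemma p2le_exp {i j : ℕ} (h : (2:ℕ) ^ i ≤ 2 ^ j) : i ≤ j := by
  by_contra hc
  push_neg at hc
  have := Nat.pow_le_pow_right (show 0 < 2 by norm_num) hc
  have h2 := Nat.two_pow_pos j
  omega

lemma p2lt_exp {i j : ℕ} (h : (2:ℕ) ^ i < 2 ^ j) : i < j := by
  by_contra hc
  push_neg at hc
  have := Nat.pow_le_pow_right (show 0 < 2 by norm_num) hc
  omega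

lemma p2le (h : i ≤ j) : (2:ℕ) ^ i ≤ 2 ^ j := Nat.pow_le_pow_right (by norm_num) h

lemma two_mul_le_of_dvd_lt {z x : ℕ} (h1 : z ∣ x) (h2 : z < x) : 2 * z ≤ x := by
  obtain ⟨k, rfl⟩ := h1
  have hk : 2 ≤ k := by
    rcases Nat.lt_or_ge k 2 with h | h
    · interval_cases k <;> omega
    · exact h
  have := Nat.mul_le_mul_left z hk
  omega

lemma le_sum_of_mem {l : List ℕ} : ∀ x ∈ l, x ≤ l.sum := by
  induction l with
  | nil => simp
  | cons a t ih =>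
    intro x hx
    rcases List.mem_cons.mp hx with rfl | hx
    · simp
    · have := ih x hx
      simp only [List.sum_cons]
      omega

lemma getLast_dvd {l : List ℕ} (hc : List.Chain' SR l) (h : l ≠ []) :
    ∀ x ∈ l, l.getLast h ∣ x := by
  have hp := List.isChain_iff_pairwise.mp hc
  intro x hx
  have hl := List.dropLast_append_getLast h
  rw [← hl] at hp
  obtain ⟨_, _, hcross⟩ := List.pairwise_append.mp hp
  rw [← hl] at hx
  rcases List.mem_append.mp hx with hx | hx
  · exact (hcross x hx _ (List.mem_singleton_self _)).1
  · rw [List.mem_singleton.mp hx]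

lemma sum_lt_two_head {l : List ℕ} (hpos : ∀ x ∈ l, 0 < x) (hc : List.Chain' SR l) :
    ∀ y ∈ l.head?, l.sum < 2 * y := by
  induction l with
  | nil => simp
  | cons x xs ih =>
    intro y hy
    obtain rfl : y = x := by simpa using hy.symm
    rcases xs with _ | ⟨z, zs⟩
    · have := hpos y (by simp)
      simp only [List.sum_cons, List.sum_nil]
      omega
    · obtain ⟨hR, htl⟩ := List.isChain_cons_cons.mp hc
      have h1 := ih (fun a ha => hpos a (List.mem_cons_of_mem _ ha)) htl z rfl
      have h2 := two_mul_le_of_dvd_lt hR.1 hR.2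
      simp only [List.sum_cons] at h1 ⊢
      omega

/-! ### desc -/

def desc : ℕ → List ℕ
  | 0 => []
  | a + 1 => 2 ^ a :: desc a

def seg (a : ℕ) : ℕ → List ℕ
  | 0 => []
  | k + 1 => 2 ^ (a + k) :: seg a k

lemma desc_sum (a : ℕ) : (desc a).sum + 1 = 2 ^ a := by
  induction a with
  | zero => simp [desc]
  | succ a ih =>
    simp only [desc, List.sum_cons, pow_succ]
    omega

lemma desc_forms (a : ℕ) : ∀ x ∈ desc a, ∃ i, x = 2 ^ i := by
  induction a with
  | zero => simp [desc]
  | succ a ih =>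
    intro x hx
    rcases List.mem_cons.mp hx with rfl | hx
    · exact ⟨a, rfl⟩
    · exact ih x hx

lemma desc_chain (a : ℕ) : List.Chain' SR (desc a) := by
  induction a with
  | zero => exact List.isChain_nil
  | succ a ih =>
    rw [desc]; unfold List.Chain'; rw [List.isChain_cons]
    refine ⟨?_, ih⟩
    intro y hy
    rcases a with _ | a'
    · simp [desc] at hy
    · simp only [desc, List.head?_cons, Option.mem_def, Option.some.injEq] at hy
      subst hy
      exact ⟨pow_dvd_pow 2 (Nat.le_succ _), by
        have := Nat.two_pow_pos a'; rw [pow_succ]; omega⟩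

lemma desc_eq_seg_append (k a : ℕ) : desc (a + k) = seg a k ++ desc a := by
  induction k with
  | zero => simp [seg]
  | succ k ih =>
    rw [show a + (k+1) = (a+k)+1 from rfl, desc, ih, seg]
    simp

lemma seg_getLast? (a : ℕ) : ∀ k, k ≠ 0 → (seg a k).getLast? = some (2 ^ a) := by
  intro k
  induction k with
  | zero => simp
  | succ k ih =>
    intro _
    rcases k with _ | k'
    · rfl
    · rw [seg, seg]
      rw [List.getLast?_cons_cons]
      exact ih (by omega)

/-! ### bin : binary representation as decreasing list of powers of two -/

def bin (n : ℕ) : List ℕ :=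
  if h : n = 0 then [] else
    have h1 : 2 ^ Nat.log2 n ≤ n := Nat.log2_self_le h
    have h2 : 0 < 2 ^ Nat.log2 n := Nat.two_pow_pos _
    2 ^ Nat.log2 n :: bin (n - 2 ^ Nat.log2 n)
decreasing_by omega

lemma bin_zero : bin 0 = [] := by rw [bin]; simp

lemma bin_eq_of_pos {n : ℕ} (h : 0 < n) :
    bin n = 2 ^ Nat.log2 n :: bin (n - 2 ^ Nat.log2 n) := by
  rw [bin, dif_neg (by omega : ¬ n = 0)]

lemma bin_spec (n : ℕ) : (bin n).sum = n ∧ (∀ x ∈ bin n, ∃ a, x = 2 ^ a) ∧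
    List.Chain' SR (bin n) ∧ (∀ x ∈ bin n, x ≤ n) := by
  induction n using Nat.strong_induction_on with
  | _ n ih =>
    obtain rfl | ⟨m, rfl⟩ : n = 0 ∨ ∃ m, n = m + 1 := by
      rcases n with _ | m
      exacts [Or.inl rfl, Or.inr ⟨m, rfl⟩]
    · simp [bin_zero]; exact List.isChain_nil
    · have h1 : 2 ^ Nat.log2 (m+1) ≤ m+1 := Nat.log2_self_le (Nat.succ_ne_zero m)
      have h2 : 0 < 2 ^ Nat.log2 (m+1) := Nat.two_pow_pos _
      have h3 : m + 1 < 2 * 2 ^ Nat.log2 (m+1) := by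
        have := Nat.lt_log2_self (n := m+1)
        rw [pow_succ] at this
        omega
      have hr : m + 1 - 2 ^ Nat.log2 (m+1) < m + 1 := by omega
      obtain ⟨ihs, ihf, ihc, ihle⟩ := ih _ hr
      rw [bin_eq_of_pos (show 0 < m+1 by omega)]
      refine ⟨by rw [List.sum_cons, ihs]; omega, ?_, ?_, ?_⟩
      · intro x hx
        rcases List.mem_cons.mp hx with rfl | hx
        · exact ⟨_, rfl⟩
        · exact ihf x hx
      · unfold List.Chain'; rw [List.isChain_cons]
        refine ⟨?_, ihc⟩
        intro y hy
        have hym : y ∈ bin (m + 1 - 2 ^ Nat.log2 (m+1)) := List.mem_of_mem_head? hy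
        have hyle : y ≤ m + 1 - 2 ^ Nat.log2 (m+1) := ihle y hym
        obtain ⟨b, rfl⟩ := ihf y hym
        have hlt : (2:ℕ) ^ b < 2 ^ Nat.log2 (m+1) := by omega
        exact ⟨pow_dvd_pow 2 (le_of_lt (p2lt_exp hlt)), hlt⟩
      · intro x hx
        rcases List.mem_cons.mp hx with rfl | hx
        · omega
        · have := ihle x hx; omega

lemma bin_sum (n : ℕ) : (bin n).sum = n := (bin_spec n).1
lemma bin_forms (n : ℕ) : ∀ x ∈ bin n, ∃ a, x = 2 ^ a := (bin_spec n).2.1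
lemma bin_chain (n : ℕ) : List.Chain' SR (bin n) := (bin_spec n).2.2.1
lemma bin_le (n : ℕ) : ∀ x ∈ bin n, x ≤ n := (bin_spec n).2.2.2

lemma bin_ne_nil {n : ℕ} (h : 0 < n) : bin n ≠ [] := by
  rw [bin_eq_of_pos h]; simp

lemma bin_head? {n : ℕ} (h : 0 < n) : (bin n).head? = some (2 ^ Nat.log2 n) := by
  rw [bin_eq_of_pos h]; rfl

lemma log2_eq {a m : ℕ} (h1 : 2 ^ a ≤ m) (h2 : m < 2 ^ (a+1)) : Nat.log2 m = a := by
  have hm : m ≠ 0 := by have := Nat.two_pow_pos a; omega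
  have hle : Nat.log2 m ≤ a := by
    by_contra hc
    push_neg at hc
    have := p2le hc
    have := Nat.log2_self_le hm
    omega
  have hge : a ≤ Nat.log2 m := by
    by_contra hc
    push_neg at hc
    have h4 : Nat.log2 m + 1 ≤ a := hc
    have := p2le h4
    have := Nat.lt_log2_self (n := m)
    omega
  omega

lemma bin_unique : ∀ l : List ℕ, (∀ x ∈ l, ∃ a, x = 2 ^ a) → List.Chain' SR l →
    bin l.sum = l := by
  intro l
  induction l with
  | nil => intro _ _; simpa using bin_zero
  | cons x xs ih =>
    intro hf hc
    obtain ⟨a, rfl⟩ := hf x List.mem_cons_self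
    have hxs : ∀ x ∈ xs, ∃ a, x = 2 ^ a := fun x hx => hf x (List.mem_cons_of_mem _ hx)
    have hcx : List.Chain' SR xs := (List.isChain_cons.mp hc).2
    have hbound : xs.sum < 2 ^ a := by
      rcases xs with _ | ⟨z, zs⟩
      · simpa using Nat.two_pow_pos a
      · obtain ⟨hR, _⟩ := List.isChain_cons_cons.mp hc
        have h1 : (z :: zs).sum < 2 * z := by
          apply sum_lt_two_head _ hcx z rfl
          intro w hw
          obtain ⟨b, rfl⟩ := hxs w hw
          exact Nat.two_pow_pos b
        have h2 := two_mul_le_of_dvd_lt hR.1 hR.2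
        omega
    have hsum : (2 ^ a :: xs).sum = 2 ^ a + xs.sum := by simp
    have hpos : 0 < 2 ^ a + xs.sum := by have := Nat.two_pow_pos a; omega
    have hlog : Nat.log2 (2 ^ a + xs.sum) = a := by
      apply log2_eq (by omega)
      rw [pow_succ]
      omega
    rw [hsum, bin_eq_of_pos hpos, hlog]
    congr 1
    · have : 2 ^ a + xs.sum - 2 ^ a = xs.sum := by omega
      rw [this]
      exact ih hxs hcx

/-! ### finiteness of Omega -/

lemma omega_finite (p q n : ℕ) : (Omega p q n).Finite := by
  have hmem : ∀ l ∈ Omega p q n, l.toFinset ∈ ((Finset.range (n+1)).powerset : Finset (Finset ℕ)) := by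
    intro l hl
    obtain ⟨hf, hc, hs⟩ := hl
    rw [Finset.mem_powerset]
    intro x hx
    rw [List.mem_toFinset] at hx
    have := le_sum_of_mem x hx
    rw [Finset.mem_range]
    omega
  have hsorted : ∀ l ∈ Omega p q n, l.Pairwise (fun x y : ℕ => x > y) := by
    intro l hl
    exact (List.isChain_iff_pairwise.mp hl.2.1).imp (fun h => h.2)
  have hfin : (List.toFinset '' (Omega p q n)).Finite := by
    apply Set.Finite.subset (Finset.finite_toSet ((Finset.range (n+1)).powerset))
    rintro _ ⟨l, hl, rfl⟩
    exact hmem l hl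
  apply Set.Finite.of_finite_image hfin
  intro l₁ h₁ l₂ h₂ he
  have s₁ := hsorted l₁ h₁
  have s₂ := hsorted l₂ h₂
  have nd₁ : l₁.Nodup := s₁.imp (fun h => by omega)
  have nd₂ : l₂.Nodup := s₂.imp (fun h => by omega)
  have perm := List.perm_of_nodup_nodup_toFinset_eq nd₁ nd₂ he
  haveI : IsAntisymm ℕ (fun x y : ℕ => x > y) := ⟨fun a b h1 h2 => by omega⟩
  exact List.Perm.eq_of_pairwise (fun a b _ _ h1 h2 => by omega) s₁ s₂ perm

/-! ### splitting of list equations -/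

lemma append_split {α : Type*} {m₁ s₁ m₂ s₂ : List α} (h : m₁ ++ s₁ = m₂ ++ s₂)
    (hl : s₁.length ≤ s₂.length) : ∃ r, m₁ = m₂ ++ r ∧ s₂ = r ++ s₁ := by
  set j := s₂.length - s₁.length with hj
  have h2 : m₁ ++ s₁ = (m₂ ++ s₂.take j) ++ s₂.drop j := by
    rw [List.append_assoc, List.take_append_drop]
    exact h
  have hlen : s₁.length = (s₂.drop j).length := by
    rw [List.length_drop]
    omega
  obtain ⟨h3, h4⟩ := List.append_inj' h2 hlen
  exact ⟨s₂.take j, h3, by rw [h4, List.take_append_drop]⟩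

lemma split_core {q : ℕ} (hq : 1 < q) {m₁ s₁ m₂ s₂ : List ℕ} (h : m₁ ++ s₁ = m₂ ++ s₂)
    (hl : s₁.length ≤ s₂.length)
    (g₁ : ∀ x ∈ m₁.getLast?, q ∣ x) (h₂ : ∀ x ∈ s₂, ¬ q ∣ x) :
    m₁ = m₂ ∧ s₁ = s₂ := by
  obtain ⟨r, hm, hs⟩ := append_split h hl
  rcases List.eq_nil_or_concat r with rfl | ⟨r', x, rfl⟩
  · constructor
    · simpa using hm
    · simpa using hs.symm
  · exfalso
    rw [List.concat_eq_append] at hm hs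
    have hx1 : m₁.getLast? = some x := by
      rw [hm, List.getLast?_append_of_ne_nil _ (by simp), List.getLast?_concat]
    have hqx : q ∣ x := g₁ x hx1
    have hxm : x ∈ s₂ := by
      rw [hs]
      simp
    exact h₂ x hxm hqx

lemma split_eq {q : ℕ} (hq : 1 < q) {m₁ s₁ m₂ s₂ : List ℕ} (h : m₁ ++ s₁ = m₂ ++ s₂)
    (h₁ : ∀ x ∈ s₁, ¬ q ∣ x) (h₂ : ∀ x ∈ s₂, ¬ q ∣ x)
    (g₁ : ∀ x ∈ m₁.getLast?, q ∣ x) (g₂ : ∀ x ∈ m₂.getLast?, q ∣ x) :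
    m₁ = m₂ ∧ s₁ = s₂ := by
  rcases le_total s₁.length s₂.length with hl | hl
  · exact split_core hq h hl g₁ h₂
  · obtain ⟨hm, hs⟩ := split_core hq h.symm hl g₂ h₁
    exact ⟨hm.symm, hs.symm⟩

lemma sum_map_mul (q : ℕ) (l : List ℕ) : (l.map (fun x => q * x)).sum = q * l.sum := by
  induction l with
  | nil => simp
  | cons a t ih => simp [ih, Nat.mul_add]

/-! ### key1 : q ∤ n+1 implies W(n+1) ≤ W(n) -/

lemma key1 {q : ℕ} (hq : 1 < q) (hq2 : Nat.Coprime 2 q) {n : ℕ} (h : ¬ q ∣ (n+1)) :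
    W 2 q (n+1) ≤ W 2 q n := by
  have fact : ∀ l ∈ Omega 2 q (n+1), ∃ a : ℕ,
      l = l.dropLast ++ [2^a] ∧
      l.dropLast ++ desc (Nat.log2 (l.getLastD 1)) = l.dropLast ++ desc a := by
    intro l hl
    obtain ⟨hf, hc, hs⟩ := hl
    have hne : l ≠ [] := by
      intro e; rw [e] at hs; simp at hs
    obtain ⟨a, b, hab⟩ := hf (l.getLast hne) (List.getLast_mem hne)
    have hdvd := getLast_dvd hc hne
    have hsn : l.getLast hne ∣ n + 1 := by rw [← hs]; exact List.dvd_sum hdvd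
    have hb : b = 0 := by
      by_contra hb
      apply h
      apply dvd_trans _ hsn
      rw [hab]
      exact dvd_mul_of_dvd_right (dvd_pow_self q hb) _
    subst hb
    rw [pow_zero, mul_one] at hab
    have hgd : l.getLastD 1 = 2 ^ a := by
      rw [List.getLastD_eq_getLast?, List.getLast?_eq_getLast hne, hab]
      rfl
    refine ⟨a, ?_, by rw [hgd, Nat.log2_two_pow]⟩
    conv_lhs => rw [← List.dropLast_append_getLast hne]
    rw [hab]
  unfold W
  refine Set.ncard_le_ncard_of_injOn
      (fun l => l.dropLast ++ desc (Nat.log2 (l.getLastD 1))) ?_ ?_ (omega_finite 2 q n)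
  · intro l hl
    obtain ⟨a, hla, hphi⟩ := fact l hl
    obtain ⟨hf, hc, hs⟩ := hl
    show l.dropLast ++ desc (Nat.log2 (l.getLastD 1)) ∈ Omega 2 q n
    rw [hphi]
    have hc' : List.Chain' SR (l.dropLast ++ [2^a]) := by rw [← hla]; exact hc
    obtain ⟨hcm, _, hjun⟩ := List.isChain_append.mp hc'
    refine ⟨?_, ?_, ?_⟩
    · intro x hx
      rcases List.mem_append.mp hx with hx | hx
      · exact hf x (List.dropLast_subset _ hx)
      · obtain ⟨i, rfl⟩ := desc_forms a x hx
        exact ⟨i, 0, by simp⟩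
    · apply List.isChain_append.mpr
      refine ⟨hcm, desc_chain a, ?_⟩
      intro x hx y hy
      have hx2 := hjun x hx (2^a) rfl
      rcases a with _ | a'
      · simp [desc] at hy
      · have hy2 : y = 2 ^ a' := by
          simp only [desc, List.head?_cons, Option.mem_def, Option.some.injEq] at hy
          omega
        subst hy2
        refine ⟨dvd_trans (pow_dvd_pow 2 (Nat.le_succ a')) hx2.1, ?_⟩
        have h1 : (2:ℕ)^a' < 2^(a'+1) := by
          have := Nat.two_pow_pos a'; rw [pow_succ]; omega
        omega
    · have hsum : l.dropLast.sum + 2^a = n + 1 := by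
        rw [← hs]
        conv_rhs => rw [hla]
        simp
      have := desc_sum a
      simp only [List.sum_append]
      omega
  · have core : ∀ l₁ ∈ Omega 2 q (n+1), ∀ l₂ ∈ Omega 2 q (n+1), ∀ a₁ a₂ : ℕ,
        l₁ = l₁.dropLast ++ [2^a₁] → l₂ = l₂.dropLast ++ [2^a₂] → a₁ ≤ a₂ →
        l₁.dropLast ++ desc a₁ = l₂.dropLast ++ desc a₂ → l₁ = l₂ := by
      intro l₁ hl₁ l₂ hl₂ a₁ a₂ he₁ he₂ hle heq
      obtain ⟨k, rfl⟩ := Nat.exists_eq_add_of_le hle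
      rw [desc_eq_seg_append k a₁, ← List.append_assoc] at heq
      have hm := List.append_cancel_right heq
      rcases Nat.eq_zero_or_pos k with rfl | hk
      · simp [seg] at hm
        rw [he₁, he₂, hm]
        norm_num
      · exfalso
        have hsegne : seg a₁ k ≠ [] := by
          rcases k with _ | k'
          · omega
          · simp [seg]
        have hlast : l₁.dropLast.getLast? = some (2 ^ a₁) := by
          rw [hm, List.getLast?_append_of_ne_nil _ hsegne, seg_getLast? a₁ k (by omega)]
        have hc₁ : List.Chain' SR (l₁.dropLast ++ [2^a₁]) := by rw [← he₁]; exact hl₁.2.1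
        obtain ⟨_, _, hjun⟩ := List.isChain_append.mp hc₁
        have := hjun _ hlast (2^a₁) rfl
        exact absurd this.2 (lt_irrefl _)
    intro l₁ h₁ l₂ h₂ heq
    obtain ⟨a₁, he₁, hp₁⟩ := fact l₁ h₁
    obtain ⟨a₂, he₂, hp₂⟩ := fact l₂ h₂
    replace heq : l₁.dropLast ++ desc (Nat.log2 (l₁.getLastD 1)) =
        l₂.dropLast ++ desc (Nat.log2 (l₂.getLastD 1)) := heq
    rw [hp₁, hp₂] at heq
    rcases le_total a₁ a₂ with hle | hle
    · exact core l₁ h₁ l₂ h₂ a₁ a₂ he₁ he₂ hle heq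
    · exact (core l₂ h₂ l₁ h₁ a₂ a₁ he₂ he₁ hle heq.symm).symm

lemma mem_of_getLast? {α : Type*} {l : List α} {x : α} (h : l.getLast? = some x) : x ∈ l := by
  have hx : x ∈ l.getLast? := h
  obtain ⟨hne, rfl⟩ := List.mem_getLast?_eq_getLast hx
  exact List.getLast_mem hne

/-! ### the map psi for key2 -/

def pq (q : ℕ) : ℕ → Bool := fun x => !(decide (q ∣ x))

def psi (q : ℕ) (l : List ℕ) : List ℕ :=
  if 2 ^ Nat.log2 ((l.rtakeWhile (pq q)).sum + 2) ∣ (l.rdropWhile (pq q)).getLastD 0 then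
    l.rdropWhile (pq q) ++ bin ((l.rtakeWhile (pq q)).sum + 2)
  else
    (l.rdropWhile (pq q) ++ (bin (((l.rtakeWhile (pq q)).sum + 1) / q)).map (fun x => q * x)) ++ [1]

lemma rsplit (q : ℕ) (l : List ℕ) : l.rdropWhile (pq q) ++ l.rtakeWhile (pq q) = l := by
  rw [List.rdropWhile, List.rtakeWhile, ← List.reverse_append,
    List.takeWhile_append_dropWhile, List.reverse_reverse]

lemma psi_spec {q : ℕ} (hq : 1 < q) (hq2 : Nat.Coprime 2 q) {n : ℕ} (hn : q ∣ (n+1))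
    {l : List ℕ} (hl : l ∈ Omega 2 q n) :
    psi q l ∈ Omega 2 q (n+2) ∧
    (∀ x ∈ l.rtakeWhile (pq q), ∃ a, x = 2^a) ∧
    List.Chain' SR (l.rtakeWhile (pq q)) ∧
    (∀ x ∈ (l.rdropWhile (pq q)).getLast?, q ∣ x) ∧
    (psi q l = l.rdropWhile (pq q) ++ bin ((l.rtakeWhile (pq q)).sum + 2) ∨
      ∃ c d u k, q * k = (l.rtakeWhile (pq q)).sum + 1 ∧ 1 ≤ k ∧
        psi q l = (l.rdropWhile (pq q) ++ (bin k).map (fun x => q * x)) ++ [1] ∧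
        (l.rdropWhile (pq q)).getLast? = some u ∧ u = 2^c * q^d ∧ 1 ≤ d ∧
        q * k + 1 = 2^(c+1)) := by
  obtain ⟨hf, hc, hs⟩ := hl
  have hq3 : 3 ≤ q := by have := q_odd hq2; omega
  have hqpos : 0 < q := by omega
  set m := l.rdropWhile (pq q) with hm
  set t := l.rtakeWhile (pq q) with ht
  have hml : m ++ t = l := rsplit q l
  have hposl : ∀ x ∈ l, 0 < x := by
    intro x hx
    obtain ⟨a, b, rfl⟩ := hf x hx
    positivity
  have htq : ∀ x ∈ t, ¬ q ∣ x := by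
    intro x hx
    have h1 := List.mem_rtakeWhile_imp hx
    simpa [pq] using h1
  have htsub : ∀ x ∈ t, x ∈ l := by
    intro x hx; rw [← hml]; exact List.mem_append_right _ hx
  have hmsub : ∀ x ∈ m, x ∈ l := by
    intro x hx; rw [← hml]; exact List.mem_append_left _ hx
  have htf : ∀ x ∈ t, ∃ a, x = 2^a := by
    intro x hx
    obtain ⟨a, b, hab⟩ := hf x (htsub x hx)
    have hb : b = 0 := by
      by_contra hb
      exact htq x hx (hab ▸ dvd_mul_of_dvd_right (dvd_pow_self q hb) _)
    exact ⟨a, by rw [hab, hb, pow_zero, mul_one]⟩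
  have hcmt : List.Chain' SR (m ++ t) := by rw [hml]; exact hc
  obtain ⟨hcm, hct, hjun⟩ := List.isChain_append.mp hcmt
  have hglq : ∀ x ∈ m.getLast?, q ∣ x := by
    intro x hx
    have hmne : m ≠ [] := by intro e; rw [e] at hx; simp at hx
    have h2 := List.rdropWhile_last_not (pq q) l (by rw [← hm]; exact hmne)
    simp only [pq, Bool.not_eq_true', decide_eq_false_iff_not, not_not] at h2
    obtain ⟨hne2, rfl⟩ := List.mem_getLast?_eq_getLast hx
    exact h2
  have hqm : ∀ x ∈ m, q ∣ x := by
    intro x hx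
    have hmne : m ≠ [] := by intro e; rw [e] at hx; simp at hx
    have hg := hglq (m.getLast hmne) (List.getLast?_eq_getLast_of_ne_nil hmne)
    exact dvd_trans hg (getLast_dvd hcm hmne x hx)
  have hqms : q ∣ m.sum := List.dvd_sum hqm
  have hsum_mt : m.sum + t.sum = n := by
    rw [← hs, ← hml]; simp
  have hT1 : q ∣ t.sum + 1 := by
    have h3 : q ∣ m.sum + (t.sum + 1) := by
      rw [show m.sum + (t.sum+1) = n+1 by omega]; exact hn
    exact (Nat.dvd_add_right hqms).mp h3
  have hTk : q * ((t.sum+1)/q) = t.sum + 1 := Nat.mul_div_cancel' hT1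
  have hkne : (t.sum+1)/q ≠ 0 := by
    intro e; rw [e, Nat.mul_zero] at hTk; omega
  have hk1 : 1 ≤ (t.sum+1)/q := Nat.one_le_iff_ne_zero.mpr hkne
  have hTge : 2 ≤ t.sum := by
    have := Nat.le_of_dvd (by omega) hT1; omega
  have htne : t ≠ [] := by
    intro e
    rw [e] at hTge
    simp at hTge
  by_cases hb : 2 ^ Nat.log2 (t.sum + 2) ∣ m.getLastD 0
  · -- normal branch
    have hpsieq : psi q l = m ++ bin (t.sum + 2) := by
      rw [psi, ← hm, ← ht, if_pos hb]
    have hmem : psi q l ∈ Omega 2 q (n+2) := by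
      rw [hpsieq]
      refine ⟨?_, ?_, ?_⟩
      · intro x hx
        rcases List.mem_append.mp hx with hx | hx
        · exact hf x (hmsub x hx)
        · obtain ⟨a, rfl⟩ := bin_forms _ x hx
          exact ⟨a, 0, by simp⟩
      · apply List.isChain_append.mpr
        refine ⟨hcm, bin_chain _, ?_⟩
        intro x hx y hy
        have hqx := hglq x hx
        have hxl : x ∈ l := hmsub x (mem_of_getLast? hx)
        have hxpos := hposl x hxl
        have hgd : m.getLastD 0 = x := by
          rw [List.getLastD_eq_getLast?, hx]
          rfl
        rw [bin_head? (by omega : 0 < t.sum + 2)] at hy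
        obtain rfl : y = 2 ^ Nat.log2 (t.sum + 2) := by simpa using hy.symm
        rw [hgd] at hb
        have hne : (2:ℕ) ^ Nat.log2 (t.sum + 2) ≠ x := by
          intro e
          exact not_q_dvd_pow2 hq hq2 _ (e ▸ hqx)
        exact ⟨hb, lt_of_le_of_ne (Nat.le_of_dvd hxpos hb) hne⟩
      · rw [List.sum_append, bin_sum]
        omega
    exact ⟨hmem, htf, hct, hglq, Or.inl hpsieq⟩
  · -- overflow branch
    have hmne : m ≠ [] := by
      intro e
      apply hb
      rw [e]
      simp
    have hu : m.getLast? = some (m.getLast hmne) := List.getLast?_eq_getLast_of_ne_nil hmne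
    set u := m.getLast hmne with hudef
    have hqu : q ∣ u := hglq u hu
    have hul : u ∈ l := hmsub u (List.getLast_mem hmne)
    have hupos := hposl u hul
    obtain ⟨c, d, hucd⟩ := hf u hul
    have hd : 1 ≤ d := by
      rcases Nat.eq_zero_or_pos d with rfl | hd
      · rw [pow_zero, mul_one] at hucd
        exact absurd (hucd ▸ hqu) (not_q_dvd_pow2 hq hq2 c)
      · exact hd
    have hgd : m.getLastD 0 = u := by
      rw [List.getLastD_eq_getLast?, hu]
      rfl
    have hh1 : t.head? = some (t.head htne) := List.head?_eq_head htne
    obtain ⟨a₁, ha₁⟩ := htf _ (List.head_mem htne)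
    have hsr := hjun u hu _ hh1
    have h2c : (2:ℕ)^a₁ ∣ 2^c := by
      apply pow2_dvd_cancel hq2 (d := d)
      rw [← ha₁, ← hucd]
      exact hsr.1
    have h2cle : (2:ℕ)^a₁ ≤ 2^c := Nat.le_of_dvd (Nat.two_pow_pos c) h2c
    have hTlt : t.sum < 2 * 2^a₁ := by
      have h3 := sum_lt_two_head (fun x hx => hposl x (htsub x hx)) hct _ hh1
      rw [ha₁] at h3
      exact h3
    have hps : (2:ℕ)^(c+1) = 2^c * 2 := pow_succ 2 c
    have hLgt : c < Nat.log2 (t.sum + 2) := by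
      by_contra hcon
      push_neg at hcon
      apply hb
      rw [hgd, hucd]
      exact dvd_mul_of_dvd_left (pow_dvd_pow 2 hcon) _
    have h2L : (2:ℕ)^(c+1) ≤ 2 ^ Nat.log2 (t.sum + 2) := p2le hLgt
    have hlogle : 2 ^ Nat.log2 (t.sum+2) ≤ t.sum + 2 := Nat.log2_self_le (by omega)
    have hT2 : t.sum + 2 = 2^(c+1) := by
      rcases (by omega : t.sum + 2 = 2^(c+1) ∨ t.sum + 2 = 2^(c+1) + 1) with h | h
      · exact h
      · exfalso
        apply not_q_dvd_pow2 hq hq2 (c+1)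
        have h4 : t.sum + 1 = 2^(c+1) := by omega
        rw [← h4]
        exact hT1
    have hqk : q * ((t.sum+1)/q) + 1 = 2^(c+1) := by
      rw [hTk]
      omega
    have h3k : 3 * ((t.sum+1)/q) ≤ q * ((t.sum+1)/q) := Nat.mul_le_mul_right _ hq3
    have hklt : (t.sum+1)/q < 2^c := by omega
    have hpsieq : psi q l =
        (m ++ (bin ((t.sum + 1) / q)).map (fun x => q * x)) ++ [1] := by
      rw [psi, ← hm, ← ht, if_neg hb]
    have hbinne : bin ((t.sum+1)/q) ≠ [] := bin_ne_nil (by omega)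
    have hmqne : (bin ((t.sum+1)/q)).map (fun x => q * x) ≠ [] := by
      intro e
      exact hbinne (List.map_eq_nil_iff.mp e)
    have hmem : psi q l ∈ Omega 2 q (n+2) := by
      rw [hpsieq]
      refine ⟨?_, ?_, ?_⟩
      · intro x hx
        rcases List.mem_append.mp hx with hx | hx
        · rcases List.mem_append.mp hx with hx | hx
          · exact hf x (hmsub x hx)
          · obtain ⟨z, hz, rfl⟩ := List.mem_map.mp hx
            obtain ⟨e, rfl⟩ := bin_forms _ z hz
            exact ⟨e, 1, by ring⟩
        · obtain rfl : x = 1 := by simpa using hx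
          exact ⟨0, 0, by norm_num⟩
      · apply List.isChain_append.mpr
        refine ⟨?_, List.isChain_singleton _, ?_⟩
        · apply List.isChain_append.mpr
          refine ⟨hcm, ?_, ?_⟩
          · exact List.isChain_map_of_isChain _
              (fun a b hab => ⟨mul_dvd_mul_left q hab.1, mul_lt_mul_of_pos_left hab.2 hqpos⟩)
              (bin_chain _)
          · intro x hx y hy
            obtain rfl : x = u := by rw [hu] at hx; exact (Option.some_inj.mp hx).symm
            rw [List.head?_map, bin_head? (by omega : 0 < (t.sum+1)/q)] at hy
            obtain rfl : y = q * 2 ^ Nat.log2 ((t.sum+1)/q) := by simpa using hy.symm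
            have hzk : 2 ^ Nat.log2 ((t.sum+1)/q) ≤ (t.sum+1)/q := Nat.log2_self_le (by omega)
            have hzlt : 2 ^ Nat.log2 ((t.sum+1)/q) < 2^c := by omega
            have hzdvd : 2 ^ Nat.log2 ((t.sum+1)/q) ∣ 2^c :=
              pow_dvd_pow 2 (le_of_lt (p2lt_exp hzlt))
            constructor
            · rw [hucd, mul_comm q (2 ^ Nat.log2 ((t.sum+1)/q))]
              exact mul_dvd_mul hzdvd (dvd_pow_self q (by omega))
            · calc q * 2 ^ Nat.log2 ((t.sum+1)/q) < q * 2^c :=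
                    mul_lt_mul_of_pos_left hzlt hqpos
                _ ≤ q^d * 2^c := Nat.mul_le_mul_right _ (Nat.le_self_pow (by omega) q)
                _ = 2^c * q^d := mul_comm _ _
                _ = u := hucd.symm
        · intro x hx y hy
          obtain rfl : y = 1 := by simpa using hy.symm
          rw [List.getLast?_append_of_ne_nil _ hmqne] at hx
          have hx3 := mem_of_getLast? hx
          obtain ⟨z, hz, rfl⟩ := List.mem_map.mp hx3
          obtain ⟨e, rfl⟩ := bin_forms _ z hz
          refine ⟨one_dvd _, ?_⟩
          have h2 : q ≤ q * 2^e := Nat.le_mul_of_pos_right q (Nat.two_pow_pos e)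
          omega
      · simp only [List.sum_append, sum_map_mul, bin_sum, List.sum_cons, List.sum_nil]
        omega
    exact ⟨hmem, htf, hct, hglq,
      Or.inr ⟨c, d, u, (t.sum+1)/q, hTk, hk1, hpsieq, hu, hucd, hd, hqk⟩⟩

lemma key2_core {q : ℕ} (hq : 1 < q) (hq2 : Nat.Coprime 2 q) {m₁ m₂ : List ℕ}
    {k₁ k₂ c₁ c₂ d₁ u₁ : ℕ}
    (h : m₁ ++ (bin k₁).map (fun x => q * x) = m₂ ++ (bin k₂).map (fun x => q * x))
    (hlen : ((bin k₁).map (fun x => q * x)).length ≤ ((bin k₂).map (fun x => q * x)).length)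
    (hu : m₁.getLast? = some u₁) (hu1 : u₁ = 2^c₁ * q^d₁) (hd : 1 ≤ d₁)
    (he₁ : q * k₁ + 1 = 2^(c₁+1)) (he₂ : q * k₂ + 1 = 2^(c₂+1)) :
    m₁ = m₂ ∧ k₁ = k₂ := by
  have hqpos : 0 < q := by omega
  obtain ⟨r, hm, hsx⟩ := append_split h hlen
  rcases List.eq_nil_or_concat r with rfl | ⟨r', x, rfl⟩
  · have hbe : (bin k₂).map (fun x => q * x) = (bin k₁).map (fun x => q * x) := by
      simpa using hsx
    have hsum := congrArg List.sum hbe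
    rw [sum_map_mul, sum_map_mul, bin_sum, bin_sum] at hsum
    exact ⟨by simpa using hm, (Nat.eq_of_mul_eq_mul_left hqpos hsum).symm⟩
  · exfalso
    rw [List.concat_eq_append] at hm hsx
    have hx1 : m₁.getLast? = some x := by
      rw [hm, List.getLast?_append_of_ne_nil _ (by simp), List.getLast?_concat]
    obtain rfl : u₁ = x := by
      rw [hu] at hx1
      exact Option.some_inj.mp hx1
    have hxmem : u₁ ∈ (bin k₂).map (fun x => q * x) := by
      rw [hsx]
      simp
    obtain ⟨z, hz, hzx⟩ := List.mem_map.mp hxmem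
    obtain ⟨e, rfl⟩ := bin_forms k₂ z hz
    -- show u₁ = q * 2^c₁
    have hzz : (2:ℕ) ^ e = 2 ^ c₁ * q ^ (d₁ - 1) := by
      apply Nat.eq_of_mul_eq_mul_left hqpos
      rw [hzx, hu1]
      have hdd : d₁ = 1 + (d₁ - 1) := by omega
      calc 2 ^ c₁ * q ^ d₁ = 2 ^ c₁ * (q ^ (1 + (d₁-1))) := by rw [← hdd]
        _ = q * (2 ^ c₁ * q ^ (d₁ - 1)) := by rw [pow_add, pow_one]; ring
    have hq1 : q ^ (d₁ - 1) = 1 := by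
      have hdvd : q ^ (d₁ - 1) ∣ 2 ^ e := Dvd.intro_left _ hzz.symm
      exact Nat.Coprime.eq_one_of_dvd (Nat.Coprime.pow (d₁-1) e hq2.symm) hdvd
    have hec : (2:ℕ) ^ e = 2 ^ c₁ := by rw [hzz, hq1, mul_one]
    have hxq : u₁ = q * 2 ^ c₁ := by rw [← hzx, hec]
    -- chain on the mapped list
    have hchmq : List.Chain' SR ((bin k₂).map (fun x => q * x)) :=
      List.isChain_map_of_isChain _
        (fun a b hab => ⟨mul_dvd_mul_left q hab.1, mul_lt_mul_of_pos_left hab.2 hqpos⟩)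
        (bin_chain k₂)
    rw [hsx] at hchmq
    obtain ⟨hcrr, _, _⟩ := List.isChain_append.mp hchmq
    have hpair := List.isChain_iff_pairwise.mp hcrr
    obtain ⟨_, _, hcross⟩ := List.pairwise_append.mp hpair
    have hdiv : ∀ y ∈ r', 2^(c₁+1) * q ∣ y := by
      intro y hy
      have hyx := hcross y hy u₁ (List.mem_singleton_self u₁)
      have hymem : y ∈ (bin k₂).map (fun x => q * x) := by
        rw [hsx]
        exact List.mem_append_left _ (List.mem_append_left _ hy)
      obtain ⟨z', hz', hzy⟩ := List.mem_map.mp hymem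
      obtain ⟨ey, rfl⟩ := bin_forms k₂ z' hz'
      have hxy : q * 2 ^ c₁ < q * 2 ^ ey := by
        rw [← hxq, hzy]
        exact hyx.2
      have hcey : c₁ < ey := p2lt_exp (Nat.lt_of_mul_lt_mul_left hxy)
      rw [← hzy, mul_comm (2^(c₁+1)) q]
      exact mul_dvd_mul_left q (pow_dvd_pow 2 hcey)
    obtain ⟨σ, hσ⟩ := List.dvd_sum hdiv
    -- sum equation
    have h5 : q * k₂ = r'.sum + u₁ + q * k₁ := by
      have h6 := congrArg List.sum hsx
      rw [sum_map_mul, bin_sum, List.sum_append, List.sum_append, List.sum_cons,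
        List.sum_nil, sum_map_mul, bin_sum] at h6
      omega
    -- assemble and parity contradiction
    obtain ⟨w, hw⟩ : ∃ w, w = q * σ := ⟨_, rfl⟩
    have hσ' : r'.sum = 2 ^ c₁ * (2 * w) := by
      rw [hσ, hw, pow_succ]
      ring
    have hM : 2 ^ (c₂+1) = 2 ^ c₁ * (2*w + q + 2) := by
      calc 2 ^ (c₂+1) = q * k₂ + 1 := he₂.symm
        _ = r'.sum + u₁ + (q * k₁ + 1) := by rw [h5]; omega
        _ = 2 ^ c₁ * (2 * w) + q * 2^c₁ + 2^(c₁+1) := by rw [hσ', hxq, he₁]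
        _ = 2 ^ c₁ * (2*w + q + 2) := by rw [pow_succ]; ring
    have hdvd2 : (2*w + q + 2) ∣ 2 ^ (c₂+1) := ⟨2^c₁, by rw [hM]; ring⟩
    have hodd := q_odd hq2
    have hcop : Nat.Coprime (2*w + q + 2) (2 ^ (c₂+1)) := by
      apply Nat.Coprime.pow_right
      rw [Nat.coprime_comm, Nat.coprime_two_left, Nat.odd_iff]
      omega
    have h1 := hcop.eq_one_of_dvd hdvd2
    omega

lemma key2 {q : ℕ} (hq : 1 < q) (hq2 : Nat.Coprime 2 q) {n : ℕ} (hn : q ∣ (n+1)) :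
    W 2 q n ≤ W 2 q (n+2) := by
  unfold W
  refine Set.ncard_le_ncard_of_injOn (psi q) (fun l hl => (psi_spec hq hq2 hn hl).1) ?_
    (omega_finite 2 q (n+2))
  intro l₁ h₁ l₂ h₂ he
  obtain ⟨_, htf₁, hct₁, hgl₁, hd₁⟩ := psi_spec hq hq2 hn h₁
  obtain ⟨_, htf₂, hct₂, hgl₂, hd₂⟩ := psi_spec hq hq2 hn h₂
  replace he : psi q l₁ = psi q l₂ := he
  have hml₁ := rsplit q l₁
  have hml₂ := rsplit q l₂
  have hbq : ∀ k : ℕ, ∀ x ∈ bin k, ¬ q ∣ x := by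
    intro k x hx
    obtain ⟨a, rfl⟩ := bin_forms k x hx
    exact not_q_dvd_pow2 hq hq2 a
  have hbq1 : ∀ x ∈ [1], ¬ q ∣ x := by
    intro x hx
    obtain rfl : x = 1 := by simpa using hx
    intro hdd
    have := Nat.dvd_one.mp hdd
    omega
  have hrec : ∀ {la lb : List ℕ},
      (∀ x ∈ la.rtakeWhile (pq q), ∃ a, x = 2^a) → List.Chain' SR (la.rtakeWhile (pq q)) →
      (∀ x ∈ lb.rtakeWhile (pq q), ∃ a, x = 2^a) → List.Chain' SR (lb.rtakeWhile (pq q)) →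
      la.rdropWhile (pq q) = lb.rdropWhile (pq q) →
      (la.rtakeWhile (pq q)).sum = (lb.rtakeWhile (pq q)).sum → la = lb := by
    intro la lb hfa hca hfb hcb hmEq hTs
    have e1 := bin_unique _ hfa hca
    have e2 := bin_unique _ hfb hcb
    have ht12 : la.rtakeWhile (pq q) = lb.rtakeWhile (pq q) := by
      rw [← e1, ← e2, hTs]
    rw [← rsplit q la, ← rsplit q lb, hmEq, ht12]
  have hmqglq : ∀ (mm : List ℕ) (kk : ℕ), 1 ≤ kk →
      (∀ x ∈ (mm ++ (bin kk).map (fun x => q * x)).getLast?, q ∣ x) := by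
    intro mm kk hkk x hx
    have hmqne : (bin kk).map (fun x => q * x) ≠ [] := by
      intro e
      exact bin_ne_nil (show 0 < kk by omega) (List.map_eq_nil_iff.mp e)
    rw [List.getLast?_append_of_ne_nil _ hmqne] at hx
    have hx2 := mem_of_getLast? hx
    obtain ⟨z, hz, rfl⟩ := List.mem_map.mp hx2
    exact Dvd.intro _ rfl
  rcases hd₁ with hp₁ | ⟨c₁, d₁, u₁, k₁, hk₁, hk₁1, hp₁, hu₁, hu₁cd, hdd₁, hqk₁⟩ <;>
    rcases hd₂ with hp₂ | ⟨c₂, d₂, u₂, k₂, hk₂, hk₂1, hp₂, hu₂, hu₂cd, hdd₂, hqk₂⟩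
  · -- normal / normal
    rw [hp₁, hp₂] at he
    obtain ⟨hmEq, hsEq⟩ := split_eq hq he (hbq _) (hbq _) hgl₁ hgl₂
    have hTs := congrArg List.sum hsEq
    rw [bin_sum, bin_sum] at hTs
    exact hrec htf₁ hct₁ htf₂ hct₂ hmEq (by omega)
  · -- normal / overflow : impossible
    exfalso
    rw [hp₁, hp₂] at he
    obtain ⟨_, hsEq⟩ := split_eq hq he (hbq _) hbq1 hgl₁ (hmqglq _ _ hk₂1)
    have hTs := congrArg List.sum hsEq
    rw [bin_sum] at hTs
    simp at hTs
  · -- overflow / normal : impossible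
    exfalso
    rw [hp₁, hp₂] at he
    obtain ⟨_, hsEq⟩ := split_eq hq he.symm (hbq _) hbq1 hgl₂ (hmqglq _ _ hk₁1)
    have hTs := congrArg List.sum hsEq
    rw [bin_sum] at hTs
    simp at hTs
  · -- overflow / overflow
    rw [hp₁, hp₂] at he
    have hee := List.append_cancel_right he
    rcases le_total ((bin k₁).map (fun x => q*x)).length ((bin k₂).map (fun x => q*x)).length
      with hlen | hlen
    · obtain ⟨hmEq, hkEq⟩ := key2_core hq hq2 hee hlen hu₁ hu₁cd hdd₁ hqk₁ hqk₂
      have hqq : q * k₁ = q * k₂ := by rw [hkEq]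
      exact hrec htf₁ hct₁ htf₂ hct₂ hmEq (by omega)
    · obtain ⟨hmEq, hkEq⟩ := key2_core hq hq2 hee.symm hlen hu₂ hu₂cd hdd₂ hqk₂ hqk₁
      have hqq : q * k₁ = q * k₂ := by rw [hkEq]
      exact hrec htf₁ hct₁ htf₂ hct₂ hmEq.symm (by omega)

end SCPaux

theorem W_local_monotonicity (q : ℕ) (hq : 1 < q) (hq2 : Nat.Coprime 2 q) :
    (∀ U : ℕ, 1 ≤ U →
      W 2 q (q * U) ≥ W 2 q (q * U + 1) ∧ W 2 q (q * U + 1) ≥ W 2 q (q * U - 1)) ∧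
    (∀ U r : ℕ, r < q - 1 → W 2 q (q * U + r) ≥ W 2 q (q * U + r + 1)) := by
  constructor
  · intro U hU
    have hpos : 1 ≤ q * U := by
      have := Nat.mul_pos (show 0 < q by omega) (show 0 < U by omega)
      omega
    constructor
    · have h : ¬ q ∣ (q * U + 1) := by
        intro hdvd
        have h2 : q ∣ q * U := dvd_mul_right q U
        have h3 : q ∣ 1 := (Nat.dvd_add_right h2).mp hdvd
        have := Nat.dvd_one.mp h3
        omega
      exact SCPaux.key1 hq hq2 h
    · have hn : q ∣ (q * U - 1) + 1 := by
        rw [show q * U - 1 + 1 = q * U by omega]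
        exact dvd_mul_right q U
      have h2 := SCPaux.key2 hq hq2 hn
      rwa [show q * U - 1 + 2 = q * U + 1 by omega] at h2
  · intro U r hr
    have h : ¬ q ∣ (q * U + r + 1) := by
      intro hdvd
      have h2 : q ∣ q * U := dvd_mul_right q U
      have h3 : q ∣ r + 1 := by
        rw [show q * U + r + 1 = q * U + (r + 1) by omega] at hdvd
        exact (Nat.dvd_add_right h2).mp hdvd
      have h4 := Nat.le_of_dvd (by omega) h3
      omega
    exact SCPaux.key1 hq hq2 h
end
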